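/- arXiv:1802.00862 — 2 statements merged into one kernel-verified Lean document; each statement's English description precedes it below -/
import Mathlib

section
/- Fix α ∈ [0,1] and 1 ≤ k ≤ n−1, let (T_m)_{m≥1} be Ford's alpha growth process, and let 𝐭• = (𝐬,(x_i)_{i∈[k]},(y_B)) ∈ 𝕋_[k]^{•(n−1)} with ℙ(ρ_k^{•(n−1)}(T_{n−1}) = 𝐭•) > 0. Then, conditionally on ρ_k^{•(n−1)}(T_{n−1}) = 𝐭•, the decorated tree ρ_k^{•(n)}(T_n) is obtained from 𝐭• by choosing one edge B of 𝐬 at random, with probability (x_i − α)/(n − 1 − α) if B = {i} is external and (y_B + α)/(n − 1 − α) if B is internal, and increasing the weight of the chosen edge by one. -/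
open scoped Classical

noncomputable section

/-- The label set `[n] = {1, …, n}`. -/
def lbl (n : ℕ) : Finset ℕ := Finset.Icc 1 n

/-- A rooted binary tree with leaves labeled by the finite set `A ⊆ ℕ`,
encoded as the collection of its edges, where each edge is identified with
the set of leaf labels in the subtree above it. -/
def IsLTree (A : Finset ℕ) (t : Finset (Finset ℕ)) : Prop :=
  (∀ B ∈ t, B ⊆ A ∧ B.Nonempty) ∧
  (∀ j ∈ A, ({j} : Finset ℕ) ∈ t) ∧
  (∀ B₁ ∈ t, ∀ B₂ ∈ t, B₁ ∩ B₂ = ∅ ∨ B₁ ⊆ B₂ ∨ B₂ ⊆ B₁) ∧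
  (∀ B ∈ t, B ≠ A → ∃! B', B' ∈ t ∧ B ∩ B' = ∅ ∧ B ∪ B' ∈ t)

/-- The space `𝕋_A` of rooted binary trees with leaves labeled by `A`. -/
def LTree (A : Finset ℕ) : Type := {t : Finset (Finset ℕ) // IsLTree A t}

noncomputable instance fintypeLTree (A : Finset ℕ) : Fintype (LTree A) := by
  have hfin : {t : Finset (Finset ℕ) | IsLTree A t}.Finite := by
    apply Set.Finite.subset (A.powerset.powerset).finite_toSet
    intro t ht
    have h : IsLTree A t := ht
    simp only [Finset.mem_coe, Finset.mem_powerset]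
    intro B hB
    exact Finset.mem_powerset.mpr (h.1 B hB).1
  exact hfin.fintype

/-- Insertion of a new leaf labeled `j` on the edge `S` of the tree `s`. -/
def insertLeaf (s : Finset (Finset ℕ)) (S : Finset ℕ) (j : ℕ) : Finset (Finset ℕ) :=
  (s.filter fun B => B ∩ S = ∅) ∪ (s.filter fun B => B ⊆ S) ∪
    ((s.filter fun B => S ⊆ B).image fun B => B ∪ {j}) ∪ {({j} : Finset ℕ)}

/-- Ford growth weight of an edge: `α` for internal edges, `1 - α` for external edges. -/
def fordWeight (α : ℝ) (B : Finset ℕ) : ℝ := if 2 ≤ B.card then α else 1 - α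

/-- Modified Ford growth weight: the external edge `{1}` gets weight `α` instead of `1 - α`. -/
def fordWeightT (α : ℝ) (B : Finset ℕ) : ℝ :=
  if 2 ≤ B.card ∨ B = ({1} : Finset ℕ) then α else 1 - α

/-- One step of Ford's alpha growth: probability that a tree with `m` leaves `s`
grows into `t` by insertion of the new leaf `m+1` at an edge chosen with probability
proportional to `1-α` (external) or `α` (internal). -/
def growStepF (α : ℝ) (m : ℕ) (s t : Finset (Finset ℕ)) : ℝ :=
  ∑ S ∈ s, if t = insertLeaf s S (m + 1) then
    fordWeight α S / (∑ S' ∈ s, fordWeight α S') else 0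

/-- One step of the modified Ford alpha growth (edge `{1}` has weight `α`). -/
def growStepFT (α : ℝ) (m : ℕ) (s t : Finset (Finset ℕ)) : ℝ :=
  ∑ S ∈ s, if t = insertLeaf s S (m + 1) then
    fordWeightT α S / (∑ S' ∈ s, fordWeightT α S') else 0

/-- `qF α m` is the law `q_{m,α}` of the `m`-th tree of Ford's alpha growth process. -/
def qF (α : ℝ) : (m : ℕ) → LTree (lbl m) → ℝ
  | 0, _ => 1
  | 1, _ => 1
  | 2, _ => 1
  | (m + 3), t => ∑ s : LTree (lbl (m + 2)), qF α (m + 2) s * growStepF α (m + 2) s.1 t.1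

/-- `qFT α m` is the law `q̃_{m,α}` of the `m`-th tree of the modified Ford alpha
growth process in which the external edge `{1}` is chosen with probability
proportional to `α` rather than `1-α`. -/
def qFT (α : ℝ) : (m : ℕ) → LTree (lbl m) → ℝ
  | 0, _ => 1
  | 1, _ => 1
  | 2, _ => 1
  | (m + 3), t => ∑ s : LTree (lbl (m + 2)), qFT α (m + 2) s * growStepFT α (m + 2) s.1 t.1

/-- Mass of `q_{m,α}` at an arbitrary edge collection (zero on non-trees). -/
def qMass (α : ℝ) (m : ℕ) (u : Finset (Finset ℕ)) : ℝ :=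
  if h : IsLTree (lbl m) u then qF α m ⟨u, h⟩ else 0

/-- Mass of `q̃_{m,α}` at an arbitrary edge collection (zero on non-trees). -/
def qMassT (α : ℝ) (m : ℕ) (u : Finset (Finset ℕ)) : ℝ :=
  if h : IsLTree (lbl m) u then qFT α m ⟨u, h⟩ else 0

/-- Mass of the uniform distribution on `𝕋_{[n]}`. -/
def unifMass (n : ℕ) : ℝ := 1 / (Fintype.card (LTree (lbl n)) : ℝ)

/-- Uniform mass at an arbitrary edge collection (zero on non-trees). -/
def unifTreeMass (c : ℕ) (u : Finset (Finset ℕ)) : ℝ :=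
  if IsLTree (lbl c) u then unifMass c else 0

/-- Smallest label in a finite label set (`0` if empty). -/
def minLbl (B : Finset ℕ) : ℕ := if h : B.Nonempty then B.min' h else 0

/-- The sibling edge of `B` in the tree `t`. -/
def sibling (t : Finset (Finset ℕ)) (B : Finset ℕ) : Finset ℕ :=
  if h : ∃ B', B' ∈ t ∧ B ∩ B' = ∅ ∧ B ∪ B' ∈ t then h.choose else ∅

/-- The parent edge of `B` in the tree `t`. -/
def parentEdge (t : Finset (Finset ℕ)) (B : Finset ℕ) : Finset ℕ := B ∪ sibling t B

/-- `ĩ = max {i, a, b}` where `a`, `b` are the smallest leaf labels in the first two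
subtrees on the ancestral path from leaf `i` to the root of `t ∈ 𝕋_A`
(`b = 0` if the path has only one subtree). -/
def tildeOf (A : Finset ℕ) (t : Finset (Finset ℕ)) (i : ℕ) : ℕ :=
  max i (max (minLbl (sibling t {i}))
    (if parentEdge t {i} = A then 0 else minLbl (sibling t (parentEdge t {i}))))

/-- Swap the leaf labels `i` and `j` in the tree `t`. -/
def swapTree (t : Finset (Finset ℕ)) (i j : ℕ) : Finset (Finset ℕ) :=
  t.image (Finset.image fun x => Equiv.swap i j x)

/-- Delete the leaf labeled `j` from the tree `t` (contracting its parent branch point). -/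
def delLeaf (t : Finset (Finset ℕ)) (j : ℕ) : Finset (Finset ℕ) :=
  (t.image fun B => B.erase j).erase ∅

/-- Down-move of the uniform chain starting from `t ∈ 𝕋_A` with selected leaf `i`:
swap labels `i` and `ĩ = max{i,a,b}` and delete the leaf now labeled `ĩ`. -/
def downUnif (A : Finset ℕ) (t : Finset (Finset ℕ)) (i : ℕ) : Finset (Finset ℕ) :=
  delLeaf (swapTree t i (tildeOf A t i)) (tildeOf A t i)

/-- Relabel all labels `> j` down by one. -/
def relabelGt (j : ℕ) (t : Finset (Finset ℕ)) : Finset (Finset ℕ) :=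
  t.image (Finset.image fun x => if j < x then x - 1 else x)

/-- Down-move of the alpha chain: after removing the leaf labeled `ĩ`, relabel the
leaves `ĩ+1, …, n` by `ĩ, …, n-1`. -/
def downAlpha (A : Finset ℕ) (t : Finset (Finset ℕ)) (i : ℕ) : Finset (Finset ℕ) :=
  relabelGt (tildeOf A t i) (downUnif A t i)

/-- Transition matrix of the uniform chain on `𝕋_{[n]}` (Definition 1.1):
uniform leaf selection, label-swapped deletion, uniform edge re-insertion of `ĩ`. -/
def PUnif (n : ℕ) (t t' : LTree (lbl n)) : ℝ :=
  (1 / (n : ℝ)) * ∑ i ∈ lbl n,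
    (1 / ((downUnif (lbl n) t.1 i).card : ℝ)) *
      ∑ S ∈ downUnif (lbl n) t.1 i,
        (if t'.1 = insertLeaf (downUnif (lbl n) t.1 i) S (tildeOf (lbl n) t.1 i) then 1 else 0)

/-- Transition matrix of the alpha chain on `𝕋_{[n]}` (Definition 2.4):
uniform leaf selection, label-swapped deletion with relabeling, and insertion of a new
leaf labeled `n` according to the alpha growth rule. -/
def PAlpha (α : ℝ) (n : ℕ) (t t' : LTree (lbl n)) : ℝ :=
  (1 / (n : ℝ)) * ∑ i ∈ lbl n, growStepF α (n - 1) (downAlpha (lbl n) t.1 i) t'.1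

/-- `t ∩ A`: the subtree of `t` spanned by the labels in `A`, reduced. -/
def restrictT (t : Finset (Finset ℕ)) (A : Finset ℕ) : Finset (Finset ℕ) :=
  (t.image fun B => B ∩ A).erase ∅

/-- The most recent ancestor edge of leaf `j` in `t` (including `{j}` itself)
that intersects the label set `A`. -/
def ancEdgeA (t : Finset (Finset ℕ)) (A : Finset ℕ) (j : ℕ) : Finset ℕ :=
  if h : (t.filter fun C => j ∈ C ∧ (C ∩ A).Nonempty).Nonempty then
    (t.filter fun C => j ∈ C ∧ (C ∩ A).Nonempty).inf' h id
  else ∅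

/-- The projection `π` sending a leaf `j` of `t` to an edge of `t ∩ A`. -/
def piProjA (t : Finset (Finset ℕ)) (A : Finset ℕ) (j : ℕ) : Finset ℕ := ancEdgeA t A j ∩ A

/-- Decorated trees: a tree shape together with a mass assignment on edges
(extended by zero off the shape). -/
abbrev DecoT : Type := Finset (Finset ℕ) × (Finset ℕ → ℕ)

/-- The decorated tree `ρ_A^{•(n)}(t)`: the reduced subtree `t ∩ A` with each edge
carrying the number of leaves of `t` projecting to it. -/
def rhoDecoA (n : ℕ) (A : Finset ℕ) (t : Finset (Finset ℕ)) : DecoT :=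
  (restrictT t A, fun B => ((lbl n).filter fun j => piProjA t A j = B).card)

/-- The decorated `k`-tree `ρ_k^{•(n)}(t)`. -/
def rhoDeco (n k : ℕ) (t : Finset (Finset ℕ)) : DecoT := rhoDecoA n (lbl k) t

/-- Collapsed trees: a tree shape together with a label-set assignment on edges. -/
abbrev StarT : Type := Finset (Finset ℕ) × (Finset ℕ → Finset ℕ)

/-- The collapsed `n`-tree with `k` leaves `ρ_k^{⋆(n)}(t)`. -/
def rhoStar (n k : ℕ) (t : Finset (Finset ℕ)) : StarT :=
  (restrictT t (lbl k), fun B => (lbl n).filter fun j => piProjA t (lbl k) j = B)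

/-- Replace each label set of a collapsed tree by its cardinality. -/
def starToDeco (ts : StarT) : DecoT := (ts.1, fun B => (ts.2 B).card)

/-- Membership in `𝕋_{[k]}^{•(n)}`: decorated `k`-trees with total mass `n`,
external masses at least 1, and mass vanishing off the shape. -/
def IsDeco (k n : ℕ) (d : DecoT) : Prop :=
  IsLTree (lbl k) d.1 ∧ (∀ B, B ∉ d.1 → d.2 B = 0) ∧ (∑ B ∈ d.1, d.2 B) = n ∧
    ∀ j ∈ lbl k, 1 ≤ d.2 {j}

/-- Edge mass of `ρ_k^{•(n)}(t)`. -/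
def massOf (n k : ℕ) (t : Finset (Finset ℕ)) (B : Finset ℕ) : ℕ := (rhoDeco n k t).2 B

/-- The urn counts of the decorated `k`-tree of `t`:
`x_i - 1` on external edges and `y_B` on internal edges. -/
def urnOf (n k : ℕ) (t : Finset (Finset ℕ)) : Finset ℕ → ℕ :=
  fun B => if B.card ≤ 1 then massOf n k t B - 1 else massOf n k t B

/-- Rising factorial `a^{(j)} = a (a+1) ⋯ (a+j-1)`. -/
def risingFac (a : ℝ) : ℕ → ℝ
  | 0 => 1
  | (j + 1) => risingFac a j * (a + j)

/-- Dirichlet-multinomial distribution `DM^β₃(m)` on triples summing to `m`, with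
parameters `(1-β, 1-β, β)`. -/
def dm3 (β : ℝ) (m j1 j2 j3 : ℕ) : ℝ :=
  if j1 + j2 + j3 = m then
    ((m.factorial : ℝ) / ((j1.factorial : ℝ) * (j2.factorial : ℝ) * (j3.factorial : ℝ))) *
      (risingFac (1 - β) j1 * risingFac (1 - β) j2 * risingFac β j3) / risingFac (2 - β) m
  else 0

/-- The decrement matrix `δ_α(N : m)` of the `(α,α)` regenerative composition. -/
def deltaAlpha (α : ℝ) (N m : ℕ) : ℝ :=
  α * (N.choose m : ℝ) * Real.Gamma ((m : ℝ) - α) * Real.Gamma ((N : ℝ) - (m : ℝ) + α) /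
    (Real.Gamma (1 - α) * Real.Gamma ((N : ℝ) + α))

/-- `δ(N : m) = δ_{1/2}(N : m)` in its binomial-coefficient form. -/
def deltaHalf (N m : ℕ) : ℝ :=
  (1 / (2 * (m : ℝ) - 1)) * (((2 * m).choose m : ℝ) *
    (((2 * N - 2 * m).choose (N - m)) : ℝ) / (((2 * N).choose N) : ℝ))

/-- Increase the mass of edge `C` by one. -/
def bumpD (d : DecoT) (C : Finset ℕ) : DecoT :=
  (d.1, fun B => if B = C then d.2 B + 1 else d.2 B)

/-- Decrease the mass of edge `C` by one. -/
def dropD (d : DecoT) (C : Finset ℕ) : DecoT :=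
  (d.1, fun B => if B = C then d.2 B - 1 else d.2 B)

/-- Up-move on decorated trees of total mass `m`: choose an edge with probability
`(x_j - α)/(m - α)` (external) or `(y_B + α)/(m - α)` (internal) and increase its
mass by one. -/
def upProb (α : ℝ) (m : ℕ) (d d' : DecoT) : ℝ :=
  ∑ C ∈ d.1,
    ((if 2 ≤ C.card then (d.2 C : ℝ) + α else (d.2 C : ℝ) - α) / ((m : ℝ) - α)) *
      (if d' = bumpD d C then 1 else 0)

/-- Case (B) mass reshuffle: set the mass of external edge `B` to `m` and reduce the
mass of its parent by `m`. -/
def caseBD (d : DecoT) (B : Finset ℕ) (m : ℕ) : DecoT :=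
  (d.1, fun C => if C = B then m else if C = parentEdge d.1 B then d.2 C - m else d.2 C)

/-- Restrict a mass function to a shape (zero off the shape). -/
def restrictF (s : Finset (Finset ℕ)) (f : Finset ℕ → ℕ) : Finset ℕ → ℕ :=
  fun B => if B ∈ s then f B else 0

/-- Insert leaf `j` on the external edge `{c}` of the decorated tree `(s, f)`, splitting
the mass of `{c}` as `x_c := j1+1`, `x_j := j2+1`, `y_{{c,j}} := j3`. -/
def insDecoExt (s : Finset (Finset ℕ)) (f : Finset ℕ → ℕ) (c j j1 j2 j3 : ℕ) : DecoT :=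
  (insertLeaf s {c} j,
    restrictF (insertLeaf s {c} j) fun B =>
      if B = ({c} : Finset ℕ) then j1 + 1 else if B = ({j} : Finset ℕ) then j2 + 1
      else if B = ({c, j} : Finset ℕ) then j3
      else if j ∈ B then f (B.erase j) else f B)

/-- Insert leaf `j` on the internal edge `C` of the decorated tree `(s, f)`, splitting
the mass of `C` as `y_{C∪{j}} := j1`, `y_C := j2`, `x_j := j3+1`. -/
def insDecoInt (s : Finset (Finset ℕ)) (f : Finset ℕ → ℕ) (C : Finset ℕ)
    (j j1 j2 j3 : ℕ) : DecoT :=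
  (insertLeaf s C j,
    restrictF (insertLeaf s C j) fun B =>
      if B = C ∪ {j} then j1 else if B = C then j2 else if B = ({j} : Finset ℕ) then j3 + 1
      else if j ∈ B then f (B.erase j) else f B)

/-- Inserting the label `j` into a decorated tree (Definition 4.2), with edge-selection
normalizer `M`: an external edge `{i}` is selected with probability `(x_i - 1)/M` and
its mass split via `DM^α₃(x_i - 2)`; an internal edge `B` is selected with probability
`y_B/M` and its mass split via `DM^{1-α}₃(y_B - 1)`. -/
def insProb (α : ℝ) (M : ℕ) (j : ℕ) (d d' : DecoT) : ℝ :=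
  ∑ C ∈ d.1,
    if 2 ≤ C.card then
      ((d.2 C : ℝ) / (M : ℝ)) *
        ∑ a ∈ Finset.range (d.2 C), ∑ b ∈ Finset.range (d.2 C),
          dm3 (1 - α) (d.2 C - 1) a b (d.2 C - 1 - a - b) *
            (if d' = insDecoInt d.1 d.2 C j a b (d.2 C - 1 - a - b) then 1 else 0)
    else
      (((d.2 C : ℝ) - 1) / (M : ℝ)) *
        ∑ a ∈ Finset.range (d.2 C), ∑ b ∈ Finset.range (d.2 C),
          dm3 α (d.2 C - 2) a b (d.2 C - 2 - a - b) *
            (if d' = insDecoExt d.1 d.2 (minLbl C) j a b (d.2 C - 2 - a - b) then 1 else 0)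

/-- Steps (iii)-(v) of resampling the label `i` (Definition 4.4) into a decorated tree of
total mass `n-1` (`n` being the total mass before the drop): choose an edge with
probability `(x_j - 1/2)/(n - 3/2)` (external) or `(y_B + 1/2)/(n - 3/2)` (internal) and
insert leaf `i` there, splitting the increased mass via `DM^{1/2}₃`. -/
def resampProb (n : ℕ) (i : ℕ) (d d' : DecoT) : ℝ :=
  ∑ C ∈ d.1,
    if 2 ≤ C.card then
      (((d.2 C : ℝ) + 1 / 2) / ((n : ℝ) - 3 / 2)) *
        ∑ a ∈ Finset.range (d.2 C + 1), ∑ b ∈ Finset.range (d.2 C + 1),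
          dm3 (1 / 2) (d.2 C) a b (d.2 C - a - b) *
            (if d' = insDecoInt d.1 d.2 C i a b (d.2 C - a - b) then 1 else 0)
    else
      (((d.2 C : ℝ) - 1 / 2) / ((n : ℝ) - 3 / 2)) *
        ∑ a ∈ Finset.range (d.2 C), ∑ b ∈ Finset.range (d.2 C),
          dm3 (1 / 2) (d.2 C - 1) a b (d.2 C - 1 - a - b) *
            (if d' = insDecoExt d.1 d.2 (minLbl C) i a b (d.2 C - 1 - a - b) then 1 else 0)

/-- Swap labels `i` and `j` in a decorated tree. -/
def swapD (d : DecoT) (i j : ℕ) : DecoT :=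
  (d.1.image (Finset.image fun x => Equiv.swap i j x),
    fun C => d.2 (C.image fun x => Equiv.swap i j x))

/-- Case (C) of the uniform decorated chain: swap `i = min B` with `ĩ`, delete leaf `ĩ`
(with its mass 1 and parent mass 0) and resample `ĩ`. -/
def caseCUnif (n k : ℕ) (d : DecoT) (B : Finset ℕ) (d' : DecoT) : ℝ :=
  resampProb n (tildeOf (lbl k) d.1 (minLbl B))
    (delLeaf (swapD d (minLbl B) (tildeOf (lbl k) d.1 (minLbl B))).1
        (tildeOf (lbl k) d.1 (minLbl B)),
      restrictF (delLeaf (swapD d (minLbl B) (tildeOf (lbl k) d.1 (minLbl B))).1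
          (tildeOf (lbl k) d.1 (minLbl B)))
        fun C => (swapD d (minLbl B) (tildeOf (lbl k) d.1 (minLbl B))).2 C +
          (swapD d (minLbl B) (tildeOf (lbl k) d.1 (minLbl B))).2
            (C ∪ {tildeOf (lbl k) d.1 (minLbl B)}))
    d'

/-- Transition matrix of the uniform decorated chain on `𝕋_{[k]}^{•(n)}`
(Definition 4.6). -/
def RUnif (n k : ℕ) (d d' : DecoT) : ℝ :=
  ∑ B ∈ d.1,
    ((d.2 B : ℝ) / (n : ℝ)) *
      (if 2 ≤ B.card ∨ 2 ≤ d.2 B then upProb (1 / 2) (n - 1) (dropD d B) d'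
       else if 0 < d.2 (parentEdge d.1 B) then
         ∑ m ∈ Finset.Icc 1 (d.2 (parentEdge d.1 B)),
           deltaHalf (d.2 (parentEdge d.1 B)) m * upProb (1 / 2) (n - 1) (caseBD d B m) d'
       else caseCUnif n k d B d')

/-- Insertion of label `j` followed by an up-move (used in case (C) of the alpha
decorated chain). -/
def insThenUp (α : ℝ) (n k j : ℕ) (d : DecoT) (d' : DecoT) : ℝ :=
  ∑ C ∈ d.1,
    if 2 ≤ C.card then
      ((d.2 C : ℝ) / ((n : ℝ) - (k : ℝ))) *
        ∑ a ∈ Finset.range (d.2 C), ∑ b ∈ Finset.range (d.2 C),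
          dm3 (1 - α) (d.2 C - 1) a b (d.2 C - 1 - a - b) *
            upProb α (n - 1) (insDecoInt d.1 d.2 C j a b (d.2 C - 1 - a - b)) d'
    else
      (((d.2 C : ℝ) - 1) / ((n : ℝ) - (k : ℝ))) *
        ∑ a ∈ Finset.range (d.2 C), ∑ b ∈ Finset.range (d.2 C),
          dm3 α (d.2 C - 2) a b (d.2 C - 2 - a - b) *
            upProb α (n - 1) (insDecoExt d.1 d.2 (minLbl C) j a b (d.2 C - 2 - a - b)) d'

/-- Dropping the label `it` from a decorated tree (Definition 4.1): delete leaf `it`,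
discard its mass and its parent's mass, and relabel the labels `> it` down by one. -/
def dropLabelD (d : DecoT) (it : ℕ) : DecoT :=
  ((delLeaf d.1 it).image (Finset.image fun x => if it < x then x - 1 else x),
    restrictF ((delLeaf d.1 it).image (Finset.image fun x => if it < x then x - 1 else x))
      fun C =>
        restrictF (delLeaf d.1 it) (fun C' => d.2 C' + d.2 (C' ∪ {it}))
          (C.image fun x => if it ≤ x then x + 1 else x))

/-- Case (C) of the alpha decorated chain: swap, drop the label `ĩ` (with relabeling),
insert the label `k` and perform an up-move. -/
def caseCAlpha (α : ℝ) (n k : ℕ) (d : DecoT) (B : Finset ℕ) (d' : DecoT) : ℝ :=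
  insThenUp α n k k
    (dropLabelD (swapD d (minLbl B) (tildeOf (lbl k) d.1 (minLbl B)))
      (tildeOf (lbl k) d.1 (minLbl B))) d'

/-- Transition matrix of the alpha decorated chain on `𝕋_{[k]}^{•(n)}`
(Definition 4.7). -/
def RAlpha (α : ℝ) (n k : ℕ) (d d' : DecoT) : ℝ :=
  ∑ B ∈ d.1,
    ((d.2 B : ℝ) / (n : ℝ)) *
      (if 2 ≤ B.card ∨ 2 ≤ d.2 B then upProb α (n - 1) (dropD d B) d'
       else if 0 < d.2 (parentEdge d.1 B) then
         ∑ m ∈ Finset.Icc 1 (d.2 (parentEdge d.1 B)),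
           deltaAlpha α (d.2 (parentEdge d.1 B)) m * upProb α (n - 1) (caseBD d B m) d'
       else caseCAlpha α n k d B d')

/-- The sub-probability transition matrix of the alpha decorated chain restricted to
moves that do not use case (C). -/
def RAlphaNoC (α : ℝ) (n k : ℕ) (d d' : DecoT) : ℝ :=
  ∑ B ∈ d.1,
    ((d.2 B : ℝ) / (n : ℝ)) *
      (if 2 ≤ B.card ∨ 2 ≤ d.2 B then upProb α (n - 1) (dropD d B) d'
       else if 0 < d.2 (parentEdge d.1 B) then
         ∑ m ∈ Finset.Icc 1 (d.2 (parentEdge d.1 B)),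
           deltaAlpha α (d.2 (parentEdge d.1 B)) m * upProb α (n - 1) (caseBD d B m) d'
       else 0)

/-- Probability that the next transition of the alpha decorated chain uses case (C)
and drops the label `it`. -/
def probDropC (n k : ℕ) (d : DecoT) (it : ℕ) : ℝ :=
  ∑ B ∈ d.1,
    if ¬(2 ≤ B.card ∨ 2 ≤ d.2 B) ∧ d.2 (parentEdge d.1 B) = 0 ∧
        tildeOf (lbl k) d.1 (minLbl B) = it then (d.2 B : ℝ) / (n : ℝ)
    else 0

/-- Rank (1-based) of `a` within the finite label set `A`. -/
def rankIn (A : Finset ℕ) (a : ℕ) : ℕ := (A.filter fun x => x ≤ a).card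

/-- Relabel the labels appearing in `u` by their ranks within `A`. -/
def relabelRank (A : Finset ℕ) (u : Finset (Finset ℕ)) : Finset (Finset ℕ) :=
  u.image (Finset.image (rankIn A))

/-- The label set `π^{-1}(B)` of leaves of `t` projecting to the edge `B` of `t ∩ [k]`. -/
def preimLbl (n k : ℕ) (t : Finset (Finset ℕ)) (B : Finset ℕ) : Finset ℕ :=
  (lbl n).filter fun j => piProjA t (lbl k) j = B

/-- The lowest edge of `t` mapping onto the edge `B` of `t ∩ [k]`. -/
def bottomEdge (k : ℕ) (t : Finset (Finset ℕ)) (B : Finset ℕ) : Finset ℕ :=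
  if h : (t.filter fun C => C ∩ lbl k = B).Nonempty then
    (t.filter fun C => C ∩ lbl k = B).inf' h id
  else ∅

/-- The internal structure `int(V_B)` of `ρ_k^{•(n)}(t)` supported on the edge `B` of
`t ∩ [k]`: the subtree of `t` collapsing to `B`, with the vertex corresponding to `B`
turned into a leaf labeled `1` if `B` is internal, all leaves relabeled by ranks. -/
def intStruct (n k : ℕ) (t : Finset (Finset ℕ)) (B : Finset ℕ) : Finset (Finset ℕ) :=
  if 2 ≤ B.card then
    relabelRank (insert 0 (preimLbl n k t B))
      ((t.image fun C =>
        (C ∩ preimLbl n k t B) ∪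
          (if (C ∩ bottomEdge k t B).Nonempty then ({0} : Finset ℕ) else ∅)).erase ∅)
  else
    relabelRank (preimLbl n k t B) ((t.image fun C => C ∩ preimLbl n k t B).erase ∅)

/-- The kernel `Λ(𝐭⋆, ·) = q_{n,1/2}( · ∣ ρ_k^{⋆(n)} = 𝐭⋆)`. -/
def LamStar (n k : ℕ) (ts : StarT) (t : LTree (lbl n)) : ℝ :=
  (unifMass n * (if rhoStar n k t.1 = ts then 1 else 0)) /
    (∑ t' : LTree (lbl n), unifMass n * (if rhoStar n k t'.1 = ts then 1 else 0))

/-- The induced transition matrix `K = Λ P ρ_k^{⋆(n)}` on collapsed trees. -/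
def KColl (n k : ℕ) (ts ts' : StarT) : ℝ :=
  ∑ t : LTree (lbl n), LamStar n k ts t *
    (∑ t'' : LTree (lbl n), PUnif n t t'' * (if rhoStar n k t''.1 = ts' then 1 else 0))

/-- The set `𝕋_{[k]}^{⋆(n)}` of collapsed `n`-trees with `k` leaves. -/
def allStar (n k : ℕ) : Finset StarT :=
  (Finset.univ : Finset (LTree (lbl n))).image fun t => rhoStar n k t.1

/-- The set `𝕋_{[k]}^{•(n)}` of decorated `k`-trees arising from `n`-trees. -/
def allDeco (n k : ℕ) : Finset DecoT :=
  (Finset.univ : Finset (LTree (lbl n))).image fun t => rhoDeco n k t.1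

/-- The kernel `Λ^{(α)}(𝐭•, ·) = q_{n,α}( · ∣ ρ_k^{•(n)} = 𝐭•)`. -/
def LamDeco (α : ℝ) (n k : ℕ) (d : DecoT) (t : LTree (lbl n)) : ℝ :=
  (qF α n t * (if rhoDeco n k t.1 = d then 1 else 0)) /
    (∑ t' : LTree (lbl n), qF α n t' * (if rhoDeco n k t'.1 = d then 1 else 0))

/-- Update rule of the generalized Pólya urn. -/
def bumpF (c : Finset ℕ → ℕ) (B : Finset ℕ) : Finset ℕ → ℕ :=
  fun C => if C = B then c C + 1 else c C

/-- One step of the generalized Pólya urn with colors the edges of `s`, in which color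
`B` is selected with probability proportional to `(1-α) + c B` (external) or
`α + c B` (internal). -/
def urnStep (α : ℝ) (s : Finset (Finset ℕ)) (c c' : Finset ℕ → ℕ) : ℝ :=
  ∑ B ∈ s, ((fordWeight α B + (c B : ℝ)) / (∑ B' ∈ s, (fordWeight α B' + (c B' : ℝ)))) *
    (if c' = bumpF c B then 1 else 0)

end


noncomputable section AuxCor410

namespace Cor410

/-- comparability of intersecting edges -/
theorem comp_of_inter {A : Finset ℕ} {t : Finset (Finset ℕ)} (h : IsLTree A t)
    {B C : Finset ℕ} (hB : B ∈ t) (hC : C ∈ t) (hne : (B ∩ C).Nonempty) :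
    B ⊆ C ∨ C ⊆ B := by
  rcases h.2.2.1 B hB C hC with h0 | h1 | h2
  · rw [h0] at hne; exact absurd hne (by simp)
  · exact Or.inl h1
  · exact Or.inr h2

theorem exists_least_of_chain (F : Finset (Finset ℕ)) (hne : F.Nonempty)
    (hch : ∀ B ∈ F, ∀ C ∈ F, B ⊆ C ∨ C ⊆ B) : ∃ C ∈ F, ∀ B ∈ F, C ⊆ B := by
  obtain ⟨M, hM, hmin⟩ := F.exists_minimal hne
  refine ⟨M, hM, fun B hB => ?_⟩
  rcases hch M hM B hB with h | h
  · exact h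
  · rcases eq_or_ne B M with rfl | hne'
    · exact subset_rfl
    · exact hmin hB h

theorem exists_greatest_of_chain (F : Finset (Finset ℕ)) (hne : F.Nonempty)
    (hch : ∀ B ∈ F, ∀ C ∈ F, B ⊆ C ∨ C ⊆ B) : ∃ C ∈ F, ∀ B ∈ F, B ⊆ C := by
  obtain ⟨M, hM, hmax⟩ := F.exists_maximal hne
  refine ⟨M, hM, fun B hB => ?_⟩
  rcases hch B hB M hM with h | h
  · exact h
  · rcases eq_or_ne M B with rfl | hne'
    · exact subset_rfl
    · exact hmax hB h

theorem root_mem {A : Finset ℕ} {t : Finset (Finset ℕ)} (h : IsLTree A t)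
    (hA : A.Nonempty) : A ∈ t := by
  obtain ⟨j, hj⟩ := hA
  have hne : t.Nonempty := ⟨{j}, h.2.1 j hj⟩
  obtain ⟨M, hM, hmax⟩ := t.exists_maximal hne
  rcases eq_or_ne M A with rfl | hMA
  · exact hM
  · obtain ⟨B', ⟨hB't, hdisj, huni⟩, _⟩ := h.2.2.2 M hM hMA
    exfalso
    have hle := hmax huni Finset.subset_union_left
    obtain ⟨x, hx⟩ := (h.1 B' hB't).2
    have hxM : x ∈ M := hle (Finset.mem_union_right _ hx)
    have : x ∈ M ∩ B' := Finset.mem_inter.2 ⟨hxM, hx⟩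
    rw [hdisj] at this; simp at this

theorem disj_forall {B C : Finset ℕ} (h : B ∩ C = ∅) {x : ℕ} (hx : x ∈ B) : x ∉ C := by
  intro hxC
  have : x ∈ B ∩ C := Finset.mem_inter.2 ⟨hx, hxC⟩
  rw [h] at this; simp at this

/-- children decomposition of an internal edge -/
theorem children {A : Finset ℕ} {t : Finset (Finset ℕ)} (h : IsLTree A t)
    {B : Finset ℕ} (hB : B ∈ t) (h2 : 2 ≤ B.card) :
    ∃ C₁ C₂, C₁ ∈ t ∧ C₂ ∈ t ∧ C₁ ∩ C₂ = ∅ ∧ C₁ ∪ C₂ = B ∧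
      (∀ S ∈ t, S ⊆ B → S ≠ B → S ⊆ C₁ ∨ S ⊆ C₂) := by
  have hBne : B.Nonempty := (h.1 B hB).2
  obtain ⟨j, hj⟩ := hBne
  have hjA : j ∈ A := (h.1 B hB).1 hj
  -- family of proper sub-edges of B containing j
  set F : Finset (Finset ℕ) := t.filter (fun C => j ∈ C ∧ C ⊆ B ∧ C ≠ B) with hF
  have hjF : ({j} : Finset ℕ) ∈ F := by
    refine Finset.mem_filter.2 ⟨h.2.1 j hjA, by simp, by simp [hj], ?_⟩
    intro hEq
    rw [← hEq] at h2; simp at h2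
  have hFne : F.Nonempty := ⟨_, hjF⟩
  have hch : ∀ B₁ ∈ F, ∀ B₂ ∈ F, B₁ ⊆ B₂ ∨ B₂ ⊆ B₁ := by
    intro B₁ h₁ B₂ h₂
    simp only [hF, Finset.mem_filter] at h₁ h₂
    exact comp_of_inter h h₁.1 h₂.1 ⟨j, Finset.mem_inter.2 ⟨h₁.2.1, h₂.2.1⟩⟩
  obtain ⟨C₁, hC₁F, hgr⟩ := exists_greatest_of_chain F hFne hch
  simp only [hF, Finset.mem_filter] at hC₁F
  obtain ⟨hC₁t, hjC₁, hC₁B, hC₁ne⟩ := hC₁F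
  have hC₁A : C₁ ≠ A := by
    intro hEq; exact hC₁ne (subset_antisymm hC₁B (hEq ▸ (h.1 B hB).1))
  obtain ⟨C₂, ⟨hC₂t, hdisj, huni⟩, _⟩ := h.2.2.2 C₁ hC₁t hC₁A
  have hUB : C₁ ∪ C₂ = B := by
    have hcomp : C₁ ∪ C₂ ⊆ B ∨ B ⊆ C₁ ∪ C₂ :=
      comp_of_inter h huni hB ⟨j, Finset.mem_inter.2 ⟨Finset.mem_union_left _ hjC₁, hj⟩⟩
    have hnotin : ¬ (C₁ ∪ C₂ ⊆ B ∧ C₁ ∪ C₂ ≠ B) := by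
      rintro ⟨hsub, hne'⟩
      have : C₁ ∪ C₂ ∈ F := Finset.mem_filter.2 ⟨huni, Finset.mem_union_left _ hjC₁, hsub, hne'⟩
      have := hgr _ this
      obtain ⟨x, hx⟩ := (h.1 C₂ hC₂t).2
      exact disj_forall hdisj (this (Finset.mem_union_right _ hx)) hx
    rcases hcomp with hsub | hsup
    · by_contra hne'; exact hnotin ⟨hsub, hne'⟩
    · -- B ⊆ C₁ ∪ C₂; show equality
      rcases eq_or_ne (C₁ ∪ C₂) B with hEq | hne'
      · exact hEq
      · exfalso
        -- C₁ ⊊ B strictly, so B \ C₁ nonempty, contained in C₂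
        have hC₂B : (C₂ ∩ B).Nonempty := by
          obtain ⟨x, hxB, hxC₁⟩ := Finset.exists_of_ssubset (ssubset_of_subset_of_ne hC₁B hC₁ne)
          have : x ∈ C₁ ∪ C₂ := hsup hxB
          rcases Finset.mem_union.1 this with hx | hx
          · exact absurd hx hxC₁
          · exact ⟨x, Finset.mem_inter.2 ⟨hx, hxB⟩⟩
        rcases comp_of_inter h hC₂t hB hC₂B with hsub2 | hsup2
        · exact hne' (subset_antisymm (Finset.union_subset hC₁B hsub2) hsup)
        · obtain ⟨x, hx⟩ := (h.1 C₁ hC₁t).2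
          exact disj_forall hdisj hx (hsup2 (hC₁B hx))
  refine ⟨C₁, C₂, hC₁t, hC₂t, hdisj, hUB, ?_⟩
  intro S hSt hSB hSne
  have hSne' : S.Nonempty := (h.1 S hSt).2
  obtain ⟨x, hx⟩ := hSne'
  have : x ∈ C₁ ∪ C₂ := hUB ▸ hSB hx
  rcases Finset.mem_union.1 this with hx1 | hx2
  · rcases comp_of_inter h hSt hC₁t ⟨x, Finset.mem_inter.2 ⟨hx, hx1⟩⟩ with hs | hs
    · exact Or.inl hs
    · -- C₁ ⊆ S : then S = B or contradiction
      rcases eq_or_ne S C₁ with rfl | hSneC₁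
      · exact Or.inl subset_rfl
      · exfalso
        have hSC₂ : (S ∩ C₂).Nonempty := by
          by_contra hemp
          have hS1 : S ⊆ C₁ := by
            intro y hy
            have : y ∈ C₁ ∪ C₂ := hUB ▸ hSB hy
            rcases Finset.mem_union.1 this with h1 | h2
            · exact h1
            · exact absurd (Finset.mem_inter.2 ⟨hy, h2⟩)
                (by rw [Finset.not_nonempty_iff_eq_empty] at hemp; rw [hemp]; simp)
          exact hSneC₁ (subset_antisymm hS1 hs)
        rcases comp_of_inter h hSt hC₂t hSC₂ with hs2 | hs2
        · obtain ⟨y, hy⟩ := (h.1 C₁ hC₁t).2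
          exact disj_forall hdisj hy (hs2 (hs hy))
        · exact hSne (subset_antisymm hSB (hUB ▸ Finset.union_subset hs hs2))
  · rcases comp_of_inter h hSt hC₂t ⟨x, Finset.mem_inter.2 ⟨hx, hx2⟩⟩ with hs | hs
    · exact Or.inr hs
    · rcases eq_or_ne S C₂ with rfl | hSneC₂
      · exact Or.inr subset_rfl
      · exfalso
        have hSC₁ : (S ∩ C₁).Nonempty := by
          by_contra hemp
          have hS2 : S ⊆ C₂ := by
            intro y hy
            have : y ∈ C₁ ∪ C₂ := hUB ▸ hSB hy
            rcases Finset.mem_union.1 this with h1 | h2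
            · exact absurd (Finset.mem_inter.2 ⟨hy, h1⟩)
                (by rw [Finset.not_nonempty_iff_eq_empty] at hemp; rw [hemp]; simp)
            · exact h2
          exact hSneC₂ (subset_antisymm hS2 hs)
        rcases comp_of_inter h hSt hC₁t hSC₁ with hs2 | hs2
        · obtain ⟨y, hy⟩ := (h.1 C₂ hC₂t).2
          exact disj_forall hdisj (hs2 (hs hy)) hy
        · exact hSne (subset_antisymm hSB (hUB ▸ Finset.union_subset hs2 hs))


theorem subtree {A : Finset ℕ} {t : Finset (Finset ℕ)} (h : IsLTree A t)
    {C : Finset ℕ} (hC : C ∈ t) : IsLTree C (t.filter (· ⊆ C)) := by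
  refine ⟨?_, ?_, ?_, ?_⟩
  · intro B hB
    rw [Finset.mem_filter] at hB
    exact ⟨hB.2, (h.1 B hB.1).2⟩
  · intro j hj
    exact Finset.mem_filter.2 ⟨h.2.1 j ((h.1 C hC).1 hj), Finset.singleton_subset_iff.2 hj⟩
  · intro B₁ h₁ B₂ h₂
    rw [Finset.mem_filter] at h₁ h₂
    exact h.2.2.1 B₁ h₁.1 B₂ h₂.1
  · intro B hB hBC
    rw [Finset.mem_filter] at hB
    obtain ⟨hBt, hBsub⟩ := hB
    have hBA : B ≠ A := by
      intro rfl'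
      exact hBC (subset_antisymm hBsub (rfl' ▸ (h.1 C hC).1))
    obtain ⟨B', ⟨hB't, hdisj, huni⟩, huniq⟩ := h.2.2.2 B hBt hBA
    have hB'C : B' ⊆ C := by
      obtain ⟨x, hx⟩ := (h.1 B hBt).2
      rcases comp_of_inter h huni hC ⟨x, Finset.mem_inter.2
          ⟨Finset.mem_union_left _ hx, hBsub hx⟩⟩ with hs | hs
      · exact (Finset.union_subset_iff.1 hs).2
      · have hCB' : (C ∩ B').Nonempty := by
          obtain ⟨y, hyC, hyB⟩ := Finset.exists_of_ssubset (ssubset_of_subset_of_ne hBsub hBC)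
          rcases Finset.mem_union.1 (hs hyC) with h1 | h2
          · exact absurd h1 hyB
          · exact ⟨y, Finset.mem_inter.2 ⟨hyC, h2⟩⟩
        rcases comp_of_inter h hC hB't hCB' with hs2 | hs2
        · exact absurd (hs2 (hBsub hx)) (disj_forall hdisj hx)
        · exact hs2
    refine ⟨B', ⟨Finset.mem_filter.2 ⟨hB't, hB'C⟩, hdisj,
      Finset.mem_filter.2 ⟨huni, Finset.union_subset hBsub hB'C⟩⟩, ?_⟩
    intro y hy
    exact huniq y ⟨(Finset.mem_filter.1 hy.1).1, hy.2.1, (Finset.mem_filter.1 hy.2.2).1⟩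

theorem card_eq_aux (N : ℕ) : ∀ (A : Finset ℕ) (t : Finset (Finset ℕ)),
    A.card ≤ N → IsLTree A t → t.card = 2 * A.card - 1 := by
  induction N with
  | zero =>
    intro A t hcard h
    have hA : A = ∅ := Finset.card_eq_zero.1 (Nat.le_zero.1 hcard)
    have ht : t = ∅ := by
      rw [Finset.eq_empty_iff_forall_notMem]
      intro B hB
      obtain ⟨hsub, hne⟩ := h.1 B hB
      obtain ⟨x, hx⟩ := hne
      rw [hA] at hsub
      exact absurd (hsub hx) (by simp)
    simp [hA, ht]
  | succ N ih =>
    intro A t hcard h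
    rcases Nat.lt_or_ge A.card 2 with hlt | hge
    · interval_cases hac : A.card
      · have hA : A = ∅ := Finset.card_eq_zero.1 hac
        have ht : t = ∅ := by
          rw [Finset.eq_empty_iff_forall_notMem]
          intro B hB
          obtain ⟨hsub, hne⟩ := h.1 B hB
          obtain ⟨x, hx⟩ := hne
          rw [hA] at hsub
          exact absurd (hsub hx) (by simp)
        simp [hA, ht]
      · obtain ⟨a, rfl⟩ := Finset.card_eq_one.1 hac
        have ht : t = {({a} : Finset ℕ)} := by
          apply subset_antisymm
          · intro B hB
            obtain ⟨hsub, hne⟩ := h.1 B hB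
            rw [Finset.mem_singleton]
            apply subset_antisymm hsub
            obtain ⟨x, hx⟩ := hne
            have := hsub hx
            rw [Finset.mem_singleton] at this
            subst this
            exact Finset.singleton_subset_iff.2 hx
          · intro B hB
            rw [Finset.mem_singleton] at hB
            subst hB
            exact h.2.1 a (by simp)
        simp [ht]
    · have hAne : A.Nonempty := Finset.card_pos.1 (by omega)
      have hAt : A ∈ t := root_mem h hAne
      obtain ⟨C₁, C₂, hC₁t, hC₂t, hdisj, hUB, hcov⟩ := children h hAt hge
      have hC₁ne : C₁.Nonempty := (h.1 C₁ hC₁t).2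
      have hC₂ne : C₂.Nonempty := (h.1 C₂ hC₂t).2
      have hC₁A : C₁ ≠ A := by
        intro rfl'
        obtain ⟨x, hx⟩ := hC₂ne
        exact disj_forall hdisj (rfl' ▸ hUB ▸ Finset.mem_union_right _ hx) hx
      have hC₂A : C₂ ≠ A := by
        intro rfl'
        obtain ⟨x, hx⟩ := hC₁ne
        exact disj_forall hdisj hx (rfl' ▸ hUB ▸ Finset.mem_union_left _ hx)
      have hC₁lt : C₁.card < A.card :=
        Finset.card_lt_card (ssubset_of_subset_of_ne (h.1 C₁ hC₁t).1 hC₁A)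
      have hC₂lt : C₂.card < A.card :=
        Finset.card_lt_card (ssubset_of_subset_of_ne (h.1 C₂ hC₂t).1 hC₂A)
      have h1 := ih C₁ (t.filter (· ⊆ C₁)) (by omega) (subtree h hC₁t)
      have h2 := ih C₂ (t.filter (· ⊆ C₂)) (by omega) (subtree h hC₂t)
      have hcards : C₁.card + C₂.card = A.card := by
        rw [← hUB, Finset.card_union_of_disjoint (Finset.disjoint_iff_inter_eq_empty.2 hdisj)]
      have hC₁cpos : 1 ≤ C₁.card := Finset.card_pos.2 hC₁ne
      have hC₂cpos : 1 ≤ C₂.card := Finset.card_pos.2 hC₂ne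
      have ht : t = ((t.filter (· ⊆ C₁)) ∪ (t.filter (· ⊆ C₂))) ∪ {A} := by
        apply subset_antisymm
        · intro B hB
          rcases eq_or_ne B A with rfl | hBA
          · exact Finset.mem_union_right _ (by simp)
          · rcases hcov B hB ((h.1 B hB).1) hBA with hs | hs
            · exact Finset.mem_union_left _
                (Finset.mem_union_left _ (Finset.mem_filter.2 ⟨hB, hs⟩))
            · exact Finset.mem_union_left _
                (Finset.mem_union_right _ (Finset.mem_filter.2 ⟨hB, hs⟩))
        · intro B hB
          rcases Finset.mem_union.1 hB with hB' | hB'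
          · rcases Finset.mem_union.1 hB' with hB'' | hB''
            · exact (Finset.mem_filter.1 hB'').1
            · exact (Finset.mem_filter.1 hB'').1
          · rw [Finset.mem_singleton] at hB'
            exact hB' ▸ hAt
      have hd12 : Disjoint (t.filter (· ⊆ C₁)) (t.filter (· ⊆ C₂)) := by
        rw [Finset.disjoint_left]
        intro B hB1 hB2
        obtain ⟨x, hx⟩ := (h.1 B (Finset.mem_filter.1 hB1).1).2
        exact disj_forall hdisj ((Finset.mem_filter.1 hB1).2 hx)
          ((Finset.mem_filter.1 hB2).2 hx)
      have hdA : Disjoint ((t.filter (· ⊆ C₁)) ∪ (t.filter (· ⊆ C₂))) ({A} : Finset (Finset ℕ)) := by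
        rw [Finset.disjoint_right]
        intro B hB hB'
        rw [Finset.mem_singleton] at hB
        subst hB
        rcases Finset.mem_union.1 hB' with hB'' | hB''
        · obtain ⟨x, hx⟩ := hC₂ne
          have hsub := (Finset.mem_filter.1 hB'').2
          exact disj_forall hdisj (hsub (hUB ▸ Finset.mem_union_right _ hx)) hx
        · obtain ⟨x, hx⟩ := hC₁ne
          have hsub := (Finset.mem_filter.1 hB'').2
          exact disj_forall hdisj hx (hsub (hUB ▸ Finset.mem_union_left _ hx))
      rw [ht, Finset.card_union_of_disjoint hdA, Finset.card_union_of_disjoint hd12, h1, h2]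
      simp only [Finset.card_singleton]
      omega

theorem card_eq {A : Finset ℕ} {t : Finset (Finset ℕ)} (h : IsLTree A t) :
    t.card = 2 * A.card - 1 :=
  card_eq_aux A.card A t le_rfl h

theorem filter_singletons {A : Finset ℕ} {t : Finset (Finset ℕ)} (h : IsLTree A t) :
    t.filter (fun B => B.card = 1) = A.image (fun j => ({j} : Finset ℕ)) := by
  ext B
  rw [Finset.mem_filter, Finset.mem_image]
  constructor
  · rintro ⟨hBt, hB1⟩
    obtain ⟨x, rfl⟩ := Finset.card_eq_one.1 hB1
    exact ⟨x, (h.1 _ hBt).1 (by simp), rfl⟩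
  · rintro ⟨j, hj, rfl⟩
    exact ⟨h.2.1 j hj, by simp⟩

theorem card_singletons {A : Finset ℕ} {t : Finset (Finset ℕ)} (h : IsLTree A t) :
    (t.filter (fun B => B.card = 1)).card = A.card := by
  rw [filter_singletons h]
  exact Finset.card_image_of_injective _ (fun a b hab => by
    simpa using Finset.singleton_injective hab)

theorem sum_fordWeight {A : Finset ℕ} {t : Finset (Finset ℕ)} (h : IsLTree A t)
    (hA : A.Nonempty) (α : ℝ) : ∑ S ∈ t, fordWeight α S = (A.card : ℝ) - α := by
  rw [← Finset.sum_filter_add_sum_filter_not t (fun B => B.card = 1)]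
  have h1 : ∑ S ∈ t.filter (fun B => B.card = 1), fordWeight α S
      = (A.card : ℝ) * (1 - α) := by
    rw [Finset.sum_congr rfl (g := fun _ => 1 - α) (fun B hB => by
      rw [Finset.mem_filter] at hB
      simp [fordWeight, hB.2])]
    rw [Finset.sum_const, card_singletons h, nsmul_eq_mul]
  have h2 : ∑ S ∈ t.filter (fun B => ¬ B.card = 1), fordWeight α S
      = ((A.card : ℝ) - 1) * α := by
    rw [Finset.sum_congr rfl (g := fun _ => α) (fun B hB => by
      rw [Finset.mem_filter] at hB
      have h1le : 1 ≤ B.card := Finset.card_pos.2 (h.1 B hB.1).2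
      have : 2 ≤ B.card := by omega
      simp [fordWeight, this])]
    rw [Finset.sum_const, nsmul_eq_mul]
    have hcc : (t.filter (fun B => ¬ B.card = 1)).card = A.card - 1 := by
      have := Finset.card_filter_add_card_filter_not (s := t)
        (p := fun B => B.card = 1)
      rw [card_singletons h, card_eq h] at this
      omega
    rw [hcc]
    have hA1 : 1 ≤ A.card := Finset.card_pos.2 hA
    push_cast [Nat.cast_sub hA1]
    ring
  rw [h1, h2]
  ring


theorem mem_insertLeaf {s : Finset (Finset ℕ)} {S B : Finset ℕ} {j : ℕ} :
    B ∈ insertLeaf s S j ↔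
      (B ∈ s ∧ (B ∩ S = ∅ ∨ B ⊆ S)) ∨ (∃ C, C ∈ s ∧ S ⊆ C ∧ B = C ∪ {j}) ∨ B = {j} := by
  simp only [insertLeaf, Finset.mem_union, Finset.mem_filter, Finset.mem_image,
    Finset.mem_singleton, Finset.mem_filter]
  constructor
  · rintro (((⟨h1, h2⟩ | ⟨h1, h2⟩) | ⟨C, ⟨hC, hSC⟩, rfl⟩) | h)
    · exact Or.inl ⟨h1, Or.inl h2⟩
    · exact Or.inl ⟨h1, Or.inr h2⟩
    · exact Or.inr (Or.inl ⟨C, hC, hSC, rfl⟩)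
    · exact Or.inr (Or.inr h)
  · rintro ((⟨h1, h2 | h2⟩) | (⟨C, hC, hSC, rfl⟩) | h)
    · exact Or.inl (Or.inl (Or.inl ⟨h1, h2⟩))
    · exact Or.inl (Or.inl (Or.inr ⟨h1, h2⟩))
    · exact Or.inl (Or.inr ⟨C, ⟨hC, hSC⟩, rfl⟩)
    · exact Or.inr h

theorem union_singleton_cancel {y C : Finset ℕ} {j : ℕ} (hy : j ∉ y) (hC : j ∉ C)
    (hEq : y ∪ {j} = C ∪ {j}) : y = C := by
  have h1 : y = (y ∪ {j}).erase j := by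
    rw [Finset.union_comm, ← Finset.insert_eq, Finset.erase_insert hy]
  have h2 : C = (C ∪ {j}).erase j := by
    rw [Finset.union_comm, ← Finset.insert_eq, Finset.erase_insert hC]
  rw [h1, h2, hEq]

theorem inter_union_singleton_empty {B C : Finset ℕ} {j : ℕ} (h : B ∩ C = ∅) (hj : j ∉ B) :
    B ∩ (C ∪ {j}) = ∅ := by
  rw [Finset.eq_empty_iff_forall_notMem]
  intro x hx
  rw [Finset.mem_inter, Finset.mem_union, Finset.mem_singleton] at hx
  rcases hx.2 with h2 | rfl
  · exact disj_forall h hx.1 h2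
  · exact hj hx.1

theorem insertLeaf_isLTree {A S : Finset ℕ} {s : Finset (Finset ℕ)} {j : ℕ}
    (h : IsLTree A s) (hS : S ∈ s) (hj : j ∉ A) :
    IsLTree (insert j A) (insertLeaf s S j) := by
  have hjs : ∀ B ∈ s, j ∉ B := fun B hB hjB => hj ((h.1 B hB).1 hjB)
  have hSne : S.Nonempty := (h.1 S hS).2
  have hSA : S ⊆ A := (h.1 S hS).1
  have hAins : insert j A = A ∪ {j} := by rw [Finset.union_comm, ← Finset.insert_eq]
  refine ⟨?_, ?_, ?_, ?_⟩
  · -- axiom (i)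
    intro B hB
    rcases mem_insertLeaf.1 hB with ⟨hBs, _⟩ | ⟨C, hC, _, rfl⟩ | rfl
    · exact ⟨((h.1 B hBs).1).trans (Finset.subset_insert j A), (h.1 B hBs).2⟩
    · constructor
      · rw [hAins]
        exact Finset.union_subset_union_left (h.1 C hC).1
      · obtain ⟨x, hx⟩ := (h.1 C hC).2
        exact ⟨x, Finset.mem_union_left _ hx⟩
    · exact ⟨by simp, by simp⟩
  · -- axiom (ii)
    intro i hi
    rcases Finset.mem_insert.1 hi with rfl | hiA
    · exact mem_insertLeaf.2 (Or.inr (Or.inr rfl))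
    · refine mem_insertLeaf.2 (Or.inl ⟨h.2.1 i hiA, ?_⟩)
      by_cases hiS : i ∈ S
      · exact Or.inr (Finset.singleton_subset_iff.2 hiS)
      · exact Or.inl (Finset.singleton_inter_of_notMem hiS)
  · -- axiom (iii)
    intro B₁ h₁ B₂ h₂
    have key : ∀ (B C : Finset ℕ), B ∈ s → (B ∩ S = ∅ ∨ B ⊆ S) → C ∈ s → S ⊆ C →
        B ∩ (C ∪ {j}) = ∅ ∨ B ⊆ C ∪ {j} ∨ C ∪ {j} ⊆ B := by
      intro B C hB hcond hC hSC
      rcases h.2.2.1 B hB C hC with hd | hsub | hsup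
      · exact Or.inl (inter_union_singleton_empty hd (hjs B hB))
      · exact Or.inr (Or.inl (hsub.trans Finset.subset_union_left))
      · rcases hcond with hd | hsub'
        · obtain ⟨x, hx⟩ := hSne
          exact absurd (Finset.mem_inter.2 ⟨hsup (hSC hx), hx⟩) (by rw [hd]; simp)
        · have : B = C := subset_antisymm (hsub'.trans hSC) hsup
          exact Or.inr (Or.inl (this ▸ Finset.subset_union_left))
    rcases mem_insertLeaf.1 h₁ with ⟨hB₁s, hc₁⟩ | ⟨C₁, hC₁, hSC₁, rfl⟩ | rfl
    · rcases mem_insertLeaf.1 h₂ with ⟨hB₂s, hc₂⟩ | ⟨C₂, hC₂, hSC₂, rfl⟩ | rfl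
      · exact h.2.2.1 B₁ hB₁s B₂ hB₂s
      · exact key B₁ C₂ hB₁s hc₁ hC₂ hSC₂
      · exact Or.inl (Finset.inter_singleton_of_notMem (hjs B₁ hB₁s))
    · rcases mem_insertLeaf.1 h₂ with ⟨hB₂s, hc₂⟩ | ⟨C₂, hC₂, hSC₂, rfl⟩ | rfl
      · rcases key B₂ C₁ hB₂s hc₂ hC₁ hSC₁ with hd | hsub | hsup
        · exact Or.inl (by rw [Finset.inter_comm]; exact hd)
        · exact Or.inr (Or.inr hsub)
        · exact Or.inr (Or.inl hsup)
      · rcases comp_of_inter h hC₁ hC₂ ⟨_, Finset.mem_inter.2 ⟨hSC₁ hSne.choose_spec,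
          hSC₂ hSne.choose_spec⟩⟩ with hsub | hsup
        · exact Or.inr (Or.inl (Finset.union_subset_union_left hsub))
        · exact Or.inr (Or.inr (Finset.union_subset_union_left hsup))
      · exact Or.inr (Or.inr (Finset.subset_union_right))
    · rcases mem_insertLeaf.1 h₂ with ⟨hB₂s, _⟩ | ⟨C₂, hC₂, hSC₂, rfl⟩ | rfl
      · exact Or.inl (Finset.singleton_inter_of_notMem (hjs B₂ hB₂s))
      · exact Or.inr (Or.inl (Finset.subset_union_right))
      · exact Or.inr (Or.inl subset_rfl)
  · -- axiom (iv)
    intro B hB hBroot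
    rcases mem_insertLeaf.1 hB with ⟨hBs, hcond⟩ | ⟨C, hC, hSC, rfl⟩ | rfl
    · -- B comes from s
      rcases eq_or_ne B S with rfl | hBS
      · -- B = S : sibling is {j}
        refine ⟨{j}, ⟨mem_insertLeaf.2 (Or.inr (Or.inr rfl)),
          Finset.inter_singleton_of_notMem (hjs B hBs), mem_insertLeaf.2
            (Or.inr (Or.inl ⟨B, hBs, subset_rfl, rfl⟩))⟩, ?_⟩
        · intro y ⟨hyu, hdisj, huni⟩
          by_cases hjy : j ∈ y
          · rcases mem_insertLeaf.1 hyu with ⟨hys, _⟩ | ⟨C, hC', hSC', rfl⟩ | rfl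
            · exact absurd hjy (hjs y hys)
            · exfalso
              obtain ⟨x, hx⟩ := hSne
              exact disj_forall hdisj (hx) (Finset.mem_union_left _ (hSC' hx))
            · rfl
          · exfalso
            rcases mem_insertLeaf.1 hyu with ⟨hys, hcy⟩ | ⟨C, hC', hSC', rfl⟩ | rfl
            · have hjBy : j ∉ B ∪ y := by
                rw [Finset.mem_union]
                push_neg
                exact ⟨hjs B hBs, hjy⟩
              rcases mem_insertLeaf.1 huni with ⟨hBys, hcBy⟩ | ⟨C, hC', hSC', hEq⟩ | hEq
              · rcases hcBy with hd | hsub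
                · obtain ⟨x, hx⟩ := hSne
                  exact disj_forall hd (Finset.mem_union_left _ hx) hx
                · obtain ⟨x, hx⟩ := (h.1 y hys).2
                  exact disj_forall hdisj ((Finset.union_subset_iff.1 hsub).2 hx) hx
              · exact hjBy (hEq ▸ Finset.mem_union_right _ (by simp))
              · exact hjBy (hEq ▸ (by simp))
            · exact hjy (Finset.mem_union_right _ (by simp))
            · exact hjy (by simp)
      · -- B ≠ S : use the sibling from s
        have hBA : B ≠ A := by
          intro hEq
          rcases hcond with hd | hsub
          · obtain ⟨x, hx⟩ := hSne
            have hxB : x ∈ B := by rw [hEq]; exact hSA hx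
            exact disj_forall hd hxB hx
          · have hAS : A ⊆ S := by rw [← hEq]; exact hsub
            exact hBS (hEq.trans (subset_antisymm hSA hAS).symm)
        obtain ⟨B', ⟨hB's, hdis, hunis⟩, huniq⟩ := h.2.2.2 B hBs hBA
        have hjB : j ∉ B := hjs B hBs
        have hjB' : j ∉ B' := hjs B' hB's
        have hjBB' : j ∉ B ∪ B' := by
          rw [Finset.mem_union]; push_neg; exact ⟨hjB, hjB'⟩
        rcases hcond with hdS | hsubS
        · -- B ∩ S = ∅
          rcases h.2.2.1 (B ∪ B') hunis S hS with hd | hsub | hsup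
          · -- (b1) : sibling is B'
            have hB'S : B' ∩ S = ∅ := by
              rw [Finset.eq_empty_iff_forall_notMem]
              intro x hx
              rw [Finset.mem_inter] at hx
              exact disj_forall hd (Finset.mem_union_right _ hx.1) hx.2
            have hBB'S : (B ∪ B') ∩ S = ∅ := hd
            refine ⟨B', ⟨mem_insertLeaf.2 (Or.inl ⟨hB's, Or.inl hB'S⟩), hdis,
              mem_insertLeaf.2 (Or.inl ⟨hunis, Or.inl hBB'S⟩)⟩, ?_⟩
            intro y ⟨hyu, hdisj, huni⟩
            have hjy : j ∉ y := by
              intro hjy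
              rcases mem_insertLeaf.1 hyu with ⟨hys, _⟩ | ⟨C, hC', hSC', rfl⟩ | rfl
              · exact hjs y hys hjy
              · -- y = C ∪ {j}, S ⊆ C : show contradiction
                have hBC : B ∩ C = ∅ := by
                  rw [Finset.eq_empty_iff_forall_notMem]
                  intro x hx
                  rw [Finset.mem_inter] at hx
                  exact disj_forall hdisj hx.1 (Finset.mem_union_left _ hx.2)
                have hjBCu : B ∪ (C ∪ {j}) = (B ∪ C) ∪ {j} := by
                  rw [Finset.union_assoc]
                rcases mem_insertLeaf.1 huni with ⟨hBys, _⟩ | ⟨C₂, hC₂, hSC₂, hEq⟩ | hEq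
                · exact hjs _ hBys (Finset.mem_union_right _ (Finset.mem_union_right _ (by simp)))
                · rw [hjBCu] at hEq
                  have hBCC₂ : B ∪ C = C₂ := union_singleton_cancel
                    (by rw [Finset.mem_union]; push_neg; exact ⟨hjB, hjs C hC'⟩)
                    (hjs C₂ hC₂) hEq
                  have : C = B' := huniq C ⟨hC', hBC, hBCC₂ ▸ hC₂⟩
                  subst this
                  obtain ⟨x, hx⟩ := hSne
                  exact disj_forall hB'S (hSC' hx) hx
                · obtain ⟨x, hx⟩ := (h.1 B hBs).2
                  have : x ∈ ({j} : Finset ℕ) := hEq ▸ Finset.mem_union_left _ hx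
                  rw [Finset.mem_singleton] at this
                  exact hjB (this ▸ hx)
              · rcases mem_insertLeaf.1 huni with ⟨hBys, _⟩ | ⟨C₂, hC₂, hSC₂, hEq⟩ | hEq
                · have : j ∈ B ∪ ({j} : Finset ℕ) := Finset.mem_union_right _ (by simp)
                  exact hjs _ hBys this
                · -- B ∪ {j} = C₂ ∪ {j} so B = C₂ ⊇ S, contradicting B ∩ S = ∅
                  have : B = C₂ := union_singleton_cancel hjB (hjs C₂ hC₂) hEq
                  obtain ⟨x', hx'⟩ := hSne
                  exact disj_forall hdS (this ▸ hSC₂ hx' : x' ∈ B) hx'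
                · obtain ⟨x', hx'⟩ := (h.1 B hBs).2
                  have : x' ∈ ({j} : Finset ℕ) := hEq ▸ Finset.mem_union_left _ hx'
                  rw [Finset.mem_singleton] at this
                  exact hjB (this ▸ hx')
            rcases mem_insertLeaf.1 hyu with ⟨hys, _⟩ | ⟨C, hC', hSC', rfl⟩ | rfl
            · have hjBy : j ∉ B ∪ y := by
                rw [Finset.mem_union]; push_neg; exact ⟨hjB, hjy⟩
              rcases mem_insertLeaf.1 huni with ⟨hBys, _⟩ | ⟨C₂, hC₂, hSC₂, hEq⟩ | hEq
              · exact huniq y ⟨hys, hdisj, hBys⟩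
              · exact absurd (hEq ▸ Finset.mem_union_right _ (by simp)) hjBy
              · exact absurd (hEq ▸ (by simp : j ∈ ({j} : Finset ℕ))) hjBy
            · exact absurd (Finset.mem_union_right _ (by simp)) hjy
            · exact absurd (by simp : j ∈ ({j} : Finset ℕ)) hjy
          · -- (b2) impossible : B ∪ B' ⊆ S but B ∩ S = ∅
            exfalso
            obtain ⟨x, hx⟩ := (h.1 B hBs).2
            exact disj_forall hdS hx (hsub (Finset.mem_union_left _ hx))
          · -- (b3) : S ⊆ B ∪ B', so S ⊆ B' ; sibling is B' ∪ {j}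
            have hSB' : S ⊆ B' := by
              intro x hx
              rcases Finset.mem_union.1 (hsup hx) with h1 | h2
              · exact absurd (Finset.mem_inter.2 ⟨h1, hx⟩) (by rw [hdS]; simp)
              · exact h2
            refine ⟨B' ∪ {j}, ⟨mem_insertLeaf.2 (Or.inr (Or.inl ⟨B', hB's, hSB', rfl⟩)),
              inter_union_singleton_empty hdis hjB, ?_⟩, ?_⟩
            · refine mem_insertLeaf.2 (Or.inr (Or.inl ⟨B ∪ B', hunis,
                hsup, ?_⟩))
              rw [Finset.union_assoc]
            · intro y ⟨hyu, hdisj, huni⟩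
              by_cases hjy : j ∈ y
              · rcases mem_insertLeaf.1 hyu with ⟨hys, _⟩ | ⟨C, hC', hSC', rfl⟩ | rfl
                · exact absurd hjy (hjs y hys)
                · -- y = C ∪ {j} : show C = B'
                  have hBC : B ∩ C = ∅ := by
                    rw [Finset.eq_empty_iff_forall_notMem]
                    intro x hx
                    rw [Finset.mem_inter] at hx
                    exact disj_forall hdisj hx.1 (Finset.mem_union_left _ hx.2)
                  rcases mem_insertLeaf.1 huni with ⟨hBys, _⟩ | ⟨C₂, hC₂, hSC₂, hEq⟩ | hEq
                  · exact absurd (Finset.mem_union_right _ (Finset.mem_union_right _ (by simp)))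
                      (hjs _ hBys)
                  · have hjBCu : B ∪ (C ∪ {j}) = (B ∪ C) ∪ {j} := by
                      rw [Finset.union_assoc]
                    rw [hjBCu] at hEq
                    have : B ∪ C = C₂ := union_singleton_cancel
                      (by rw [Finset.mem_union]; push_neg; exact ⟨hjB, hjs C hC'⟩)
                      (hjs C₂ hC₂) hEq
                    have : C = B' := huniq C ⟨hC', hBC, this ▸ hC₂⟩
                    rw [this]
                  · exfalso
                    obtain ⟨x, hx⟩ := (h.1 B hBs).2
                    have : x ∈ ({j} : Finset ℕ) := hEq ▸ Finset.mem_union_left _ hx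
                    rw [Finset.mem_singleton] at this
                    exact hjB (this ▸ hx)
                · -- y = {j} : then B ∪ {j} ∈ u gives B ⊇ S, contra
                  exfalso
                  rcases mem_insertLeaf.1 huni with ⟨hBys, _⟩ | ⟨C₂, hC₂, hSC₂, hEq⟩ | hEq
                  · exact hjs _ hBys (Finset.mem_union_right _ (by simp))
                  · have : B = C₂ := union_singleton_cancel hjB (hjs C₂ hC₂) hEq
                    obtain ⟨x', hx'⟩ := hSne
                    exact disj_forall hdS (this ▸ hSC₂ hx' : x' ∈ B) hx'
                  · obtain ⟨x', hx'⟩ := (h.1 B hBs).2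
                    have : x' ∈ ({j} : Finset ℕ) := hEq ▸ Finset.mem_union_left _ hx'
                    rw [Finset.mem_singleton] at this
                    exact hjB (this ▸ hx')
              · -- j ∉ y : show contradiction (y would be B' but conditions fail)
                exfalso
                rcases mem_insertLeaf.1 hyu with ⟨hys, hcy⟩ | ⟨C, hC', hSC', rfl⟩ | rfl
                · have hjBy : j ∉ B ∪ y := by
                    rw [Finset.mem_union]; push_neg; exact ⟨hjB, hjy⟩
                  rcases mem_insertLeaf.1 huni with ⟨hBys, hcBy⟩ | ⟨C₂, hC₂, hSC₂, hEq⟩ | hEq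
                  · have hyB' : y = B' := huniq y ⟨hys, hdisj, hBys⟩
                    subst hyB'
                    rcases hcy with hd | hsub'
                    · obtain ⟨x, hx⟩ := hSne
                      exact disj_forall hd (hSB' hx) hx
                    · -- B' ⊆ S ⊆ B' so B' = S, check B ∪ B' membership condition
                      have hB'S : y = S := subset_antisymm hsub' hSB'
                      rcases hcBy with hd2 | hsub2
                      · obtain ⟨x, hx⟩ := hSne
                        exact disj_forall hd2 (Finset.mem_union_right _ (hB'S ▸ hx)) hx
                      · obtain ⟨x, hx⟩ := (h.1 B hBs).2
                        exact disj_forall hdS hx (hsub2 (Finset.mem_union_left _ hx))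
                  · exact hjBy (hEq ▸ Finset.mem_union_right _ (by simp))
                  · exact hjBy (hEq ▸ (by simp : j ∈ ({j} : Finset ℕ)))
                · exact hjy (Finset.mem_union_right _ (by simp))
                · exact hjy (by simp)
        · -- B ⊊ S : everything stays inside S
          have hBB'S : B ∪ B' ⊆ S := by
            rcases h.2.2.1 (B ∪ B') hunis S hS with hd | hsub | hsup
            · exfalso
              obtain ⟨x, hx⟩ := (h.1 B hBs).2
              exact disj_forall hd (Finset.mem_union_left _ hx) (hsubS hx)
            · exact hsub
            · obtain ⟨x, hxS, hxB⟩ := Finset.exists_of_ssubset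
                (ssubset_of_subset_of_ne hsubS hBS)
              have hxB' : x ∈ B' := by
                rcases Finset.mem_union.1 (hsup hxS) with h1 | h2
                · exact absurd h1 hxB
                · exact h2
              rcases comp_of_inter h hB's hS ⟨x, Finset.mem_inter.2 ⟨hxB', hxS⟩⟩ with hs | hs
              · exact Finset.union_subset hsubS hs
              · exfalso
                obtain ⟨x', hx'⟩ := (h.1 B hBs).2
                exact disj_forall hdis hx' (hs (hsubS hx'))
          have hB'S : B' ⊆ S := (Finset.union_subset_iff.1 hBB'S).2
          refine ⟨B', ⟨mem_insertLeaf.2 (Or.inl ⟨hB's, Or.inr hB'S⟩), hdis,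
            mem_insertLeaf.2 (Or.inl ⟨hunis, Or.inr hBB'S⟩)⟩, ?_⟩
          intro y ⟨hyu, hdisj, huni⟩
          have hjy : j ∉ y := by
            intro hjy
            rcases mem_insertLeaf.1 hyu with ⟨hys, _⟩ | ⟨C, hC', hSC', rfl⟩ | rfl
            · exact hjs y hys hjy
            · obtain ⟨x, hx⟩ := (h.1 B hBs).2
              exact disj_forall hdisj hx (Finset.mem_union_left _ (hSC' (hsubS hx)))
            · rcases mem_insertLeaf.1 huni with ⟨hBys, _⟩ | ⟨C₂, hC₂, hSC₂, hEq⟩ | hEq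
              · exact hjs _ hBys (Finset.mem_union_right _ (by simp))
              · have : B = C₂ := union_singleton_cancel hjB (hjs C₂ hC₂) hEq
                exact hBS (subset_antisymm hsubS (this ▸ hSC₂))
              · obtain ⟨x', hx'⟩ := (h.1 B hBs).2
                have : x' ∈ ({j} : Finset ℕ) := hEq ▸ Finset.mem_union_left _ hx'
                rw [Finset.mem_singleton] at this
                exact hjB (this ▸ hx')
          rcases mem_insertLeaf.1 hyu with ⟨hys, _⟩ | ⟨C, hC', hSC', rfl⟩ | rfl
          · have hjBy : j ∉ B ∪ y := by
              rw [Finset.mem_union]; push_neg; exact ⟨hjB, hjy⟩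
            rcases mem_insertLeaf.1 huni with ⟨hBys, _⟩ | ⟨C₂, hC₂, hSC₂, hEq⟩ | hEq
            · exact huniq y ⟨hys, hdisj, hBys⟩
            · exact absurd (hEq ▸ Finset.mem_union_right _ (by simp)) hjBy
            · exact absurd (hEq ▸ (by simp : j ∈ ({j} : Finset ℕ))) hjBy
          · exact absurd (Finset.mem_union_right _ (by simp)) hjy
          · exact absurd (by simp : j ∈ ({j} : Finset ℕ)) hjy
    · -- B = C ∪ {j}
      have hCA : C ≠ A := by
        rintro rfl
        exact hBroot (by rw [hAins])
      obtain ⟨C', ⟨hC's, hdis, hunis⟩, huniq⟩ := h.2.2.2 C hC hCA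
      have hC'S : C' ∩ S = ∅ := by
        rw [Finset.eq_empty_iff_forall_notMem]
        intro x hx
        rw [Finset.mem_inter] at hx
        exact disj_forall hdis (hSC hx.2) hx.1
      have hdisj' : (C ∪ {j}) ∩ C' = ∅ := by
        rw [Finset.eq_empty_iff_forall_notMem]
        intro x hx
        rw [Finset.mem_inter, Finset.mem_union, Finset.mem_singleton] at hx
        rcases hx.1 with h1 | rfl
        · exact disj_forall hdis h1 hx.2
        · exact hjs C' hC's hx.2
      refine ⟨C', ⟨mem_insertLeaf.2 (Or.inl ⟨hC's, Or.inl hC'S⟩), hdisj',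
        mem_insertLeaf.2 (Or.inr (Or.inl ⟨C ∪ C', hunis, hSC.trans Finset.subset_union_left,
          by rw [Finset.union_right_comm]⟩))⟩, ?_⟩
      intro y ⟨hyu, hdisj, huni⟩
      have hjy : j ∉ y := fun hjy =>
        disj_forall hdisj (Finset.mem_union_right _ (by simp)) hjy
      rcases mem_insertLeaf.1 hyu with ⟨hys, _⟩ | ⟨C₂, hC₂, hSC₂, rfl⟩ | rfl
      · have hCy : C ∩ y = ∅ := by
          rw [Finset.eq_empty_iff_forall_notMem]
          intro x hx
          rw [Finset.mem_inter] at hx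
          exact disj_forall hdisj (Finset.mem_union_left _ hx.1) hx.2
        have hEq2 : C ∪ {j} ∪ y = (C ∪ y) ∪ {j} := by
          rw [Finset.union_right_comm]
        rcases mem_insertLeaf.1 huni with ⟨hBys, _⟩ | ⟨C₂, hC₂, hSC₂, hEq⟩ | hEq
        · exact absurd (Finset.mem_union_left _ (Finset.mem_union_right _ (by simp)))
            (hjs _ hBys)
        · rw [hEq2] at hEq
          have : C ∪ y = C₂ := union_singleton_cancel
            (by rw [Finset.mem_union]; push_neg; exact ⟨hjs C hC, hjy⟩) (hjs C₂ hC₂) hEq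
          exact huniq y ⟨hys, hCy, this ▸ hC₂⟩
        · exfalso
          obtain ⟨x, hx⟩ := (h.1 C hC).2
          have : x ∈ ({j} : Finset ℕ) :=
            hEq ▸ Finset.mem_union_left _ (Finset.mem_union_left _ hx)
          rw [Finset.mem_singleton] at this
          exact hjs C hC (this ▸ hx)
      · exact absurd (Finset.mem_union_right _ (by simp)) hjy
      · exact absurd (by simp : j ∈ ({j} : Finset ℕ)) hjy
    · -- B = {j} : sibling is S
      refine ⟨S, ⟨mem_insertLeaf.2 (Or.inl ⟨hS, Or.inr subset_rfl⟩),
        Finset.singleton_inter_of_notMem (fun hjS => hj (hSA hjS)),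
        mem_insertLeaf.2 (Or.inr (Or.inl ⟨S, hS, subset_rfl, by
          rw [Finset.union_comm]⟩))⟩, ?_⟩
      intro y ⟨hyu, hdisj, huni⟩
      have hjy : j ∉ y := fun hjy => disj_forall hdisj (by simp) hjy
      rcases mem_insertLeaf.1 hyu with ⟨hys, hcy⟩ | ⟨C, hC', hSC', rfl⟩ | rfl
      · have hEq2 : {j} ∪ y = y ∪ {j} := Finset.union_comm _ _
        rcases mem_insertLeaf.1 huni with ⟨hBys, _⟩ | ⟨C₂, hC₂, hSC₂, hEq⟩ | hEq
        · exact absurd (Finset.mem_union_left _ (by simp)) (hjs _ hBys)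
        · rw [hEq2] at hEq
          have hyC₂ : y = C₂ := union_singleton_cancel hjy (hjs C₂ hC₂) hEq
          subst hyC₂
          rcases hcy with hd | hsub
          · exfalso
            obtain ⟨x, hx⟩ := hSne
            exact disj_forall hd (hSC₂ hx) hx
          · exact subset_antisymm hsub hSC₂
        · exfalso
          obtain ⟨x, hx⟩ := (h.1 y hys).2
          have : x ∈ ({j} : Finset ℕ) := hEq ▸ Finset.mem_union_right _ hx
          rw [Finset.mem_singleton] at this
          exact hjy (this ▸ hx)
      · exact absurd (Finset.mem_union_right _ (by simp)) hjy
      · exact absurd (by simp : j ∈ ({j} : Finset ℕ)) hjy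


/-- The family of ancestors of `S` in `s` meeting `K`. -/
def Fam (s : Finset (Finset ℕ)) (K S : Finset ℕ) : Finset (Finset ℕ) :=
  s.filter fun C => S ⊆ C ∧ (C ∩ K).Nonempty

/-- The least ancestor of `S` meeting `K`, intersected with `K`. -/
noncomputable def pEdge (s : Finset (Finset ℕ)) (K S : Finset ℕ) : Finset ℕ :=
  if h : (Fam s K S).Nonempty then ((Fam s K S).inf' h id) ∩ K else ∅

theorem mem_Fam {s : Finset (Finset ℕ)} {K S C : Finset ℕ} :
    C ∈ Fam s K S ↔ C ∈ s ∧ S ⊆ C ∧ (C ∩ K).Nonempty := by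
  simp [Fam, Finset.mem_filter]

theorem pEdge_eq_of_least {s : Finset (Finset ℕ)} {K S L : Finset ℕ}
    (hL : L ∈ s) (hSL : S ⊆ L) (hLK : (L ∩ K).Nonempty)
    (hmin : ∀ B ∈ s, S ⊆ B → (B ∩ K).Nonempty → L ⊆ B) :
    pEdge s K S = L ∩ K := by
  have hLF : L ∈ Fam s K S := mem_Fam.2 ⟨hL, hSL, hLK⟩
  rw [pEdge, dif_pos ⟨L, hLF⟩]
  congr 1
  apply le_antisymm
  · exact Finset.inf'_le id hLF
  · refine Finset.le_inf' _ _ (fun B hB => ?_)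
    rw [mem_Fam] at hB
    exact hmin B hB.1 hB.2.1 hB.2.2

theorem piProjA_eq_of_least {s : Finset (Finset ℕ)} {K L : Finset ℕ} {j : ℕ}
    (hL : L ∈ s) (hjL : j ∈ L) (hLK : (L ∩ K).Nonempty)
    (hmin : ∀ B ∈ s, j ∈ B → (B ∩ K).Nonempty → L ⊆ B) :
    piProjA s K j = L ∩ K := by
  have hLF : L ∈ s.filter (fun C => j ∈ C ∧ (C ∩ K).Nonempty) :=
    Finset.mem_filter.2 ⟨hL, hjL, hLK⟩
  rw [piProjA, ancEdgeA, dif_pos ⟨L, hLF⟩]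
  congr 1
  apply le_antisymm
  · exact Finset.inf'_le id hLF
  · refine Finset.le_inf' _ _ (fun B hB => ?_)
    rw [Finset.mem_filter] at hB
    exact hmin B hB.1 hB.2.1 hB.2.2

/-- Existence of a least ancestor meeting `K`. -/
theorem exists_least_anc {A : Finset ℕ} {s : Finset (Finset ℕ)} (h : IsLTree A s)
    {K S : Finset ℕ} (hS : S ∈ s) (hK : K.Nonempty) (hKA : K ⊆ A) :
    ∃ L, L ∈ s ∧ S ⊆ L ∧ (L ∩ K).Nonempty ∧
      ∀ B ∈ s, S ⊆ B → (B ∩ K).Nonempty → L ⊆ B := by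
  have hSne : S.Nonempty := (h.1 S hS).2
  have hAne : A.Nonempty := hK.mono hKA
  have hAF : A ∈ Fam s K S := mem_Fam.2 ⟨root_mem h hAne, (h.1 S hS).1,
    hK.mono (Finset.subset_inter hKA subset_rfl)⟩
  have hch : ∀ B₁ ∈ Fam s K S, ∀ B₂ ∈ Fam s K S, B₁ ⊆ B₂ ∨ B₂ ⊆ B₁ := by
    intro B₁ h₁ B₂ h₂
    rw [mem_Fam] at h₁ h₂
    obtain ⟨x, hx⟩ := hSne
    exact comp_of_inter h h₁.1 h₂.1 ⟨x, Finset.mem_inter.2 ⟨h₁.2.1 hx, h₂.2.1 hx⟩⟩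
  obtain ⟨L, hLF, hmin⟩ := exists_least_of_chain _ ⟨A, hAF⟩ hch
  rw [mem_Fam] at hLF
  exact ⟨L, hLF.1, hLF.2.1, hLF.2.2, fun B hB h1 h2 =>
    hmin B (mem_Fam.2 ⟨hB, h1, h2⟩)⟩

theorem piProjA_eq_pEdge {A : Finset ℕ} {s : Finset (Finset ℕ)} (h : IsLTree A s)
    {K : Finset ℕ} {j : ℕ} (hj : j ∈ A) (hK : K.Nonempty) (hKA : K ⊆ A) :
    piProjA s K j = pEdge s K {j} := by
  obtain ⟨L, hLs, hSL, hLK, hmin⟩ := exists_least_anc h (h.2.1 j hj) hK hKA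
  rw [piProjA_eq_of_least hLs (hSL (by simp)) hLK
    (fun B hB h1 h2 => hmin B hB (Finset.singleton_subset_iff.2 h1) h2),
    pEdge_eq_of_least hLs hSL hLK hmin]

theorem union_singleton_inter {C K : Finset ℕ} {n : ℕ} (hn : n ∉ K) :
    (C ∪ {n}) ∩ K = C ∩ K := by
  rw [Finset.union_inter_distrib_right, Finset.singleton_inter_of_notMem hn,
    Finset.union_empty]

/-- restriction is unchanged by leaf insertion -/
theorem restrictT_insertLeaf {A S K : Finset ℕ} {s : Finset (Finset ℕ)} {n : ℕ}
    (h : IsLTree A s) (hS : S ∈ s) (hn : n ∉ A) (hKA : K ⊆ A) :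
    restrictT (insertLeaf s S n) K = restrictT s K := by
  have hnK : n ∉ K := fun hx => hn (hKA hx)
  ext B
  simp only [restrictT, Finset.mem_erase, Finset.mem_image]
  constructor
  · rintro ⟨hBne, C, hC, rfl⟩
    refine ⟨hBne, ?_⟩
    rcases mem_insertLeaf.1 hC with ⟨hCs, _⟩ | ⟨C', hC', hSC', rfl⟩ | rfl
    · exact ⟨C, hCs, rfl⟩
    · exact ⟨C', hC', (union_singleton_inter hnK).symm⟩
    · exact absurd (Finset.singleton_inter_of_notMem hnK) hBne
  · rintro ⟨hBne, C, hC, rfl⟩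
    refine ⟨hBne, ?_⟩
    rcases h.2.2.1 C hC S hS with hd | hsub | hsup
    · exact ⟨C, mem_insertLeaf.2 (Or.inl ⟨hC, Or.inl hd⟩), rfl⟩
    · exact ⟨C, mem_insertLeaf.2 (Or.inl ⟨hC, Or.inr hsub⟩), rfl⟩
    · exact ⟨C ∪ {n}, mem_insertLeaf.2 (Or.inr (Or.inl ⟨C, hC, hsup, rfl⟩)),
        union_singleton_inter hnK⟩

/-- old leaves project identically after insertion -/
theorem piProjA_insertLeaf_old {A S K : Finset ℕ} {s : Finset (Finset ℕ)} {n j : ℕ}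
    (h : IsLTree A s) (hS : S ∈ s) (hn : n ∉ A) (hK : K.Nonempty) (hKA : K ⊆ A)
    (hj : j ∈ A) :
    piProjA (insertLeaf s S n) K j = piProjA s K j := by
  have hnK : n ∉ K := fun hx => hn (hKA hx)
  have hjn : j ≠ n := fun hEq => hn (hEq ▸ hj)
  have hSne : S.Nonempty := (h.1 S hS).2
  obtain ⟨L, hLs, hjL, hLK, hmin⟩ := exists_least_anc h (h.2.1 j hj) hK hKA
  have hjL' : j ∈ L := hjL (by simp)
  have hmin' : ∀ B ∈ s, j ∈ B → (B ∩ K).Nonempty → L ⊆ B :=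
    fun B hB h1 h2 => hmin B hB (Finset.singleton_subset_iff.2 h1) h2
  rw [piProjA_eq_of_least hLs hjL' hLK hmin']
  rcases h.2.2.1 L hLs S hS with hd | hsub | hsup
  · -- L ∈ u, still least
    apply piProjA_eq_of_least (mem_insertLeaf.2 (Or.inl ⟨hLs, Or.inl hd⟩)) hjL' hLK
    intro B hB h1 h2
    rcases mem_insertLeaf.1 hB with ⟨hBs, _⟩ | ⟨C, hC, hSC, rfl⟩ | rfl
    · exact hmin' B hBs h1 h2
    · have hjC : j ∈ C := by
        rcases Finset.mem_union.1 h1 with h' | h'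
        · exact h'
        · exact absurd (Finset.mem_singleton.1 h') hjn
      exact (hmin' C hC hjC (by rwa [union_singleton_inter hnK] at h2)).trans
        Finset.subset_union_left
    · exact absurd (Finset.mem_singleton.1 h1) hjn
  · apply piProjA_eq_of_least (mem_insertLeaf.2 (Or.inl ⟨hLs, Or.inr hsub⟩)) hjL' hLK
    intro B hB h1 h2
    rcases mem_insertLeaf.1 hB with ⟨hBs, _⟩ | ⟨C, hC, hSC, rfl⟩ | rfl
    · exact hmin' B hBs h1 h2
    · have hjC : j ∈ C := by
        rcases Finset.mem_union.1 h1 with h' | h'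
        · exact h'
        · exact absurd (Finset.mem_singleton.1 h') hjn
      exact (hmin' C hC hjC (by rwa [union_singleton_inter hnK] at h2)).trans
        Finset.subset_union_left
    · exact absurd (Finset.mem_singleton.1 h1) hjn
  · -- S ⊆ L
    rcases eq_or_ne L S with rfl | hLS
    · -- L = S : L ⊆ S, same as above
      apply piProjA_eq_of_least (mem_insertLeaf.2 (Or.inl ⟨hLs, Or.inr subset_rfl⟩)) hjL' hLK
      intro B hB h1 h2
      rcases mem_insertLeaf.1 hB with ⟨hBs, _⟩ | ⟨C, hC, hSC, rfl⟩ | rfl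
      · exact hmin' B hBs h1 h2
      · have hjC : j ∈ C := by
          rcases Finset.mem_union.1 h1 with h' | h'
          · exact h'
          · exact absurd (Finset.mem_singleton.1 h') hjn
        exact (hmin' C hC hjC (by rwa [union_singleton_inter hnK] at h2)).trans
          Finset.subset_union_left
      · exact absurd (Finset.mem_singleton.1 h1) hjn
    · -- S ⊊ L : least in u is L ∪ {n}
      have hres : piProjA (insertLeaf s S n) K j = (L ∪ {n}) ∩ K := by
        apply piProjA_eq_of_least
          (mem_insertLeaf.2 (Or.inr (Or.inl ⟨L, hLs, hsup, rfl⟩)))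
          (Finset.mem_union_left _ hjL') (by rwa [union_singleton_inter hnK])
        intro B hB h1 h2
        rcases mem_insertLeaf.1 hB with ⟨hBs, hcond⟩ | ⟨C, hC, hSC, rfl⟩ | rfl
        · -- B ∈ s : impossible since it would be between S and inside S
          exfalso
          have hLB : L ⊆ B := hmin' B hBs h1 h2
          rcases hcond with hd | hsub'
          · obtain ⟨x, hx⟩ := hSne
            exact disj_forall hd (hLB (hsup hx)) hx
          · exact hLS (subset_antisymm (hLB.trans hsub') hsup)
        · have hjC : j ∈ C := by
            rcases Finset.mem_union.1 h1 with h' | h'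
            · exact h'
            · exact absurd (Finset.mem_singleton.1 h') hjn
          exact Finset.union_subset_union_left
            (hmin' C hC hjC (by rwa [union_singleton_inter hnK] at h2))
        · exact absurd (Finset.mem_singleton.1 h1) hjn
      rw [hres, union_singleton_inter hnK]

/-- the new leaf projects to the edge of insertion -/
theorem piProjA_insertLeaf_new {A S K : Finset ℕ} {s : Finset (Finset ℕ)} {n : ℕ}
    (h : IsLTree A s) (hS : S ∈ s) (hn : n ∉ A) (hK : K.Nonempty) (hKA : K ⊆ A) :
    piProjA (insertLeaf s S n) K n = pEdge s K S := by
  have hnK : n ∉ K := fun hx => hn (hKA hx)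
  obtain ⟨L, hLs, hSL, hLK, hmin⟩ := exists_least_anc h hS hK hKA
  rw [pEdge_eq_of_least hLs hSL hLK hmin]
  have hres : piProjA (insertLeaf s S n) K n = (L ∪ {n}) ∩ K := by
    apply piProjA_eq_of_least
      (mem_insertLeaf.2 (Or.inr (Or.inl ⟨L, hLs, hSL, rfl⟩)))
      (Finset.mem_union_right _ (by simp)) (by rwa [union_singleton_inter hnK])
    intro B hB h1 h2
    rcases mem_insertLeaf.1 hB with ⟨hBs, _⟩ | ⟨C, hC, hSC, rfl⟩ | rfl
    · exact absurd h1 (fun hx => hn ((h.1 B hBs).1 hx))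
    · exact Finset.union_subset_union_left
        (hmin C hC hSC (by rwa [union_singleton_inter hnK] at h2))
    · rw [Finset.singleton_inter_of_notMem hnK] at h2
      exact absurd h2 (by simp)
  rw [hres, union_singleton_inter hnK]


theorem rhoDeco_insertLeaf {m k : ℕ} (hk1 : 1 ≤ k) (hkm : k ≤ m)
    {s : Finset (Finset ℕ)} (h : IsLTree (lbl m) s) {S : Finset ℕ} (hS : S ∈ s) :
    rhoDeco (m + 1) k (insertLeaf s S (m + 1)) = bumpD (rhoDeco m k s) (pEdge s (lbl k) S) := by
  have hK : (lbl k).Nonempty := ⟨1, by simp [lbl, Finset.mem_Icc]; omega⟩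
  have hKA : lbl k ⊆ lbl m := by
    intro x hx; simp only [lbl, Finset.mem_Icc] at hx ⊢; omega
  have hn : (m + 1) ∉ lbl m := by simp [lbl, Finset.mem_Icc]
  have hlbl : lbl (m + 1) = insert (m + 1) (lbl m) := by
    ext x; simp only [lbl, Finset.mem_Icc, Finset.mem_insert]; omega
  unfold rhoDeco rhoDecoA bumpD
  refine Prod.ext ?_ ?_
  · simpa using restrictT_insertLeaf h hS hn hKA
  · funext B
    simp only
    have hold : ∀ j ∈ lbl m,
        (piProjA (insertLeaf s S (m + 1)) (lbl k) j = B) ↔ (piProjA s (lbl k) j = B) :=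
      fun j hj => by rw [piProjA_insertLeaf_old h hS hn hK hKA hj]
    rw [hlbl, Finset.filter_insert]
    by_cases hPB : piProjA (insertLeaf s S (m + 1)) (lbl k) (m + 1) = B
    · rw [if_pos hPB, Finset.card_insert_of_notMem
        (fun hmem => hn (Finset.mem_filter.1 hmem).1), Finset.filter_congr hold]
      rw [piProjA_insertLeaf_new h hS hn hK hKA] at hPB
      rw [if_pos hPB.symm]
    · rw [if_neg hPB, Finset.filter_congr hold]
      rw [piProjA_insertLeaf_new h hS hn hK hKA] at hPB
      rw [if_neg (fun hEq => hPB hEq.symm)]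

theorem fiber_weight {m k : ℕ} (hk1 : 1 ≤ k) (hkm : k ≤ m)
    {s : Finset (Finset ℕ)} (h : IsLTree (lbl m) s) {B : Finset ℕ}
    (hB : B ∈ restrictT s (lbl k)) (α : ℝ) :
    ∑ S ∈ s.filter (fun S => pEdge s (lbl k) S = B), fordWeight α S
      = (((lbl m).filter (fun j => piProjA s (lbl k) j = B)).card : ℝ)
        + (if 2 ≤ B.card then α else -α) := by
  set K := lbl k with hKdef
  have hK : K.Nonempty := ⟨1, by simp [hKdef, lbl, Finset.mem_Icc]; omega⟩
  have hKA : K ⊆ lbl m := by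
    intro x hx; simp only [hKdef, lbl, Finset.mem_Icc] at hx ⊢; omega
  obtain ⟨hBne0, C₀, hC₀s, hC₀K⟩ : B ≠ ∅ ∧ ∃ C ∈ s, C ∩ K = B := by
    simpa [restrictT, Finset.mem_erase, Finset.mem_image] using hB
  have hBne : B.Nonempty := Finset.nonempty_iff_ne_empty.2 hBne0
  set D : Finset (Finset ℕ) := s.filter (fun C => C ∩ K = B) with hDdef
  have hDne : D.Nonempty := ⟨C₀, Finset.mem_filter.2 ⟨hC₀s, hC₀K⟩⟩
  have hBsubD : ∀ C ∈ D, B ⊆ C := by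
    intro C hC
    rw [hDdef, Finset.mem_filter] at hC
    rw [← hC.2]
    exact Finset.inter_subset_left
  have hch : ∀ B₁ ∈ D, ∀ B₂ ∈ D, B₁ ⊆ B₂ ∨ B₂ ⊆ B₁ := by
    intro B₁ h₁ B₂ h₂
    obtain ⟨x, hx⟩ := hBne
    exact comp_of_inter h (Finset.mem_filter.1 h₁).1 (Finset.mem_filter.1 h₂).1
      ⟨x, Finset.mem_inter.2 ⟨hBsubD _ h₁ hx, hBsubD _ h₂ hx⟩⟩
  obtain ⟨Cm, hCmD, hCmle⟩ := exists_least_of_chain D hDne hch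
  obtain ⟨CM, hCMD, hCMge⟩ := exists_greatest_of_chain D hDne hch
  have hCms : Cm ∈ s := (Finset.mem_filter.1 hCmD).1
  have hCmK : Cm ∩ K = B := (Finset.mem_filter.1 hCmD).2
  have hCMs : CM ∈ s := (Finset.mem_filter.1 hCMD).1
  have hCMK : CM ∩ K = B := (Finset.mem_filter.1 hCMD).2
  have hCmCM : Cm ⊆ CM := hCmle CM hCMD
  have hCmne : Cm.Nonempty := (h.1 Cm hCms).2
  have hBCm : B ⊆ Cm := hBsubD Cm hCmD
  -- fiber characterization
  have hchar : ∀ S ∈ s, (pEdge s K S = B ↔ (S ⊆ CM ∧ ¬(S ⊆ Cm ∧ S ≠ Cm))) := by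
    intro S hS
    have hSne : S.Nonempty := (h.1 S hS).2
    constructor
    · intro hP
      obtain ⟨L, hLs, hSL, hLK, hmin⟩ := exists_least_anc h hS hK hKA
      rw [pEdge_eq_of_least hLs hSL hLK hmin] at hP
      have hLD : L ∈ D := Finset.mem_filter.2 ⟨hLs, hP⟩
      have hLCM : L ⊆ CM := hCMge L hLD
      refine ⟨hSL.trans hLCM, ?_⟩
      rintro ⟨hsub, hne⟩
      have hCm2 : 2 ≤ Cm.card := by
        by_contra hc
        have h1 : Cm.card = 1 := by
          have := Finset.card_pos.2 hCmne; omega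
        have hScard : 1 ≤ S.card := Finset.card_pos.2 hSne
        exact hne ((Finset.eq_of_subset_of_card_le hsub (by omega)).symm).symm
      obtain ⟨C₁, C₂, hC₁s, hC₂s, hdis, hUB, hcov⟩ := children h hCms hCm2
      have key : ∀ C₁' C₂' : Finset ℕ, C₁' ∈ s → C₂' ∈ s → C₁' ∩ C₂' = ∅ →
          C₁' ∪ C₂' = Cm → S ⊆ C₁' → False := by
        intro C₁' C₂' h₁s h₂s hdis' hUB' hSC₁
        have hC₁Cm : C₁' ⊆ Cm := hUB' ▸ Finset.subset_union_left
        have hC₂ne : C₂'.Nonempty := (h.1 C₂' h₂s).2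
        have hC₁ne : C₁'.Nonempty := (h.1 C₁' h₁s).2
        by_cases hC₁K : (C₁' ∩ K).Nonempty
        · have hLC₁ : L ⊆ C₁' := hmin C₁' h₁s hSC₁ hC₁K
          have hC₁D : C₁' ∈ D := by
            refine Finset.mem_filter.2 ⟨h₁s, subset_antisymm ?_ ?_⟩
            · rw [← hCmK]
              exact Finset.inter_subset_inter hC₁Cm subset_rfl
            · rw [← hP]
              exact Finset.inter_subset_inter hLC₁ subset_rfl
          have := hCmle C₁' hC₁D
          obtain ⟨x, hx⟩ := hC₂ne
          exact disj_forall hdis' (this (hUB' ▸ Finset.mem_union_right _ hx)) hx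
        · have hC₂K : C₂' ∩ K = B := by
            rw [← hCmK, ← hUB', Finset.union_inter_distrib_right,
              Finset.not_nonempty_iff_eq_empty.1 hC₁K, Finset.empty_union]
          have hC₂D : C₂' ∈ D := Finset.mem_filter.2 ⟨h₂s, hC₂K⟩
          have := hCmle C₂' hC₂D
          obtain ⟨x, hx⟩ := hC₁ne
          exact disj_forall hdis' hx (this (hUB' ▸ Finset.mem_union_left _ hx))
      rcases hcov S hS hsub hne with hs | hs
      · exact key C₁ C₂ hC₁s hC₂s hdis hUB hs
      · exact key C₂ C₁ hC₂s hC₁s (by rwa [Finset.inter_comm]) (by rwa [Finset.union_comm]) hs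
    · rintro ⟨hsub, hnot⟩
      have hcase : Cm ⊆ S ∨ S ∩ Cm = ∅ := by
        rcases h.2.2.1 S hS Cm hCms with hd | hs | hs
        · exact Or.inr hd
        · rcases eq_or_ne S Cm with rfl | hne
          · exact Or.inl subset_rfl
          · exact absurd ⟨hs, hne⟩ hnot
        · exact Or.inl hs
      rcases hcase with hCmS | hdisj
      · -- S itself is the least ancestor
        have hSK : S ∩ K = B := by
          apply subset_antisymm
          · rw [← hCMK]
            exact Finset.inter_subset_inter hsub subset_rfl
          · rw [← hCmK]
            exact Finset.inter_subset_inter hCmS subset_rfl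
        rw [pEdge_eq_of_least hS subset_rfl (hSK ▸ hBne) (fun B' hB' h1 _ => h1)]
        exact hSK
      · obtain ⟨L, hLs, hSL, hLK, hmin⟩ := exists_least_anc h hS hK hKA
        rw [pEdge_eq_of_least hLs hSL hLK hmin]
        have hLCM : L ⊆ CM := hmin CM hCMs hsub (hCMK ▸ hBne)
        have hLKB : L ∩ K ⊆ B := by
          rw [← hCMK]
          exact Finset.inter_subset_inter hLCM subset_rfl
        have hCmL : Cm ⊆ L := by
          obtain ⟨x, hx⟩ := hLK
          have hxCm : x ∈ Cm := hBCm (hLKB hx)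
          rcases comp_of_inter h hLs hCms
            ⟨x, Finset.mem_inter.2 ⟨(Finset.mem_inter.1 hx).1, hxCm⟩⟩ with hs | hs
          · exfalso
            obtain ⟨y, hy⟩ := hSne
            exact disj_forall hdisj hy (hs (hSL hy))
          · exact hs
        apply subset_antisymm hLKB
        rw [← hCmK]
        exact Finset.inter_subset_inter hCmL subset_rfl
  -- rewrite the fiber as a difference of subtrees
  have hfib : s.filter (fun S => pEdge s K S = B)
      = s.filter (fun S => S ⊆ CM) \ s.filter (fun S => S ⊆ Cm ∧ S ≠ Cm) := by
    ext S
    simp only [Finset.mem_sdiff, Finset.mem_filter]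
    constructor
    · intro ⟨hSs, hP⟩
      have := (hchar S hSs).1 hP
      exact ⟨⟨hSs, this.1⟩, fun hcon => this.2 ⟨hcon.2.1, hcon.2.2⟩⟩
    · intro ⟨⟨hSs, hsub⟩, hnot⟩
      exact ⟨hSs, (hchar S hSs).2 ⟨hsub, fun hcon => hnot ⟨hSs, hcon.1, hcon.2⟩⟩⟩
  have hsubfil : s.filter (fun S => S ⊆ Cm ∧ S ≠ Cm) ⊆ s.filter (fun S => S ⊆ CM) := by
    intro S hS
    rw [Finset.mem_filter] at hS ⊢
    exact ⟨hS.1, hS.2.1.trans hCmCM⟩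
  have herase : s.filter (fun S => S ⊆ Cm ∧ S ≠ Cm) = (s.filter (fun S => S ⊆ Cm)).erase Cm := by
    ext S
    simp only [Finset.mem_filter, Finset.mem_erase]
    tauto
  have hsum1 : ∑ S ∈ s.filter (fun S => S ⊆ CM), fordWeight α S = (CM.card : ℝ) - α := by
    have := sum_fordWeight (subtree h hCMs) (h.1 CM hCMs).2 α
    simpa using this
  have hsum2 : ∑ S ∈ s.filter (fun S => S ⊆ Cm), fordWeight α S = (Cm.card : ℝ) - α := by
    have := sum_fordWeight (subtree h hCms) hCmne α
    simpa using this
  have hCmfil : Cm ∈ s.filter (fun S => S ⊆ Cm) := Finset.mem_filter.2 ⟨hCms, subset_rfl⟩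
  rw [hfib, Finset.sum_sdiff_eq_sub hsubfil, hsum1, herase,
    Finset.sum_erase_eq_sub hCmfil, hsum2]
  -- identify the leaf count
  have hmass : ((lbl m).filter (fun j => piProjA s K j = B))
      = if 2 ≤ Cm.card then CM \ Cm else CM := by
    have hjchar : ∀ j ∈ lbl m, (piProjA s K j = B) ↔
        (j ∈ CM ∧ ¬(j ∈ Cm ∧ ({j} : Finset ℕ) ≠ Cm)) := by
      intro j hj
      rw [piProjA_eq_pEdge h hj hK hKA, hchar {j} (h.2.1 j hj)]
      simp [Finset.singleton_subset_iff, ne_comm]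
    by_cases hCm2 : 2 ≤ Cm.card
    · rw [if_pos hCm2]
      ext j
      rw [Finset.mem_filter, Finset.mem_sdiff]
      constructor
      · intro ⟨hj, hP⟩
        have := (hjchar j hj).1 hP
        refine ⟨this.1, fun hjC => this.2 ⟨hjC, fun hEq => ?_⟩⟩
        rw [← hEq] at hCm2; simp at hCm2
      · intro ⟨hjCM, hjCm⟩
        have hjm : j ∈ lbl m := (h.1 CM hCMs).1 hjCM
        exact ⟨hjm, (hjchar j hjm).2 ⟨hjCM, fun hcon => hjCm hcon.1⟩⟩
    · rw [if_neg hCm2]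
      have hCm1 : Cm.card = 1 := by
        have := Finset.card_pos.2 hCmne; omega
      obtain ⟨i, hi⟩ := Finset.card_eq_one.1 hCm1
      ext j
      rw [Finset.mem_filter]
      constructor
      · intro ⟨hj, hP⟩
        exact ((hjchar j hj).1 hP).1
      · intro hjCM
        have hjm : j ∈ lbl m := (h.1 CM hCMs).1 hjCM
        refine ⟨hjm, (hjchar j hjm).2 ⟨hjCM, ?_⟩⟩
        rintro ⟨hjCm, hne⟩
        rw [hi] at hjCm
        rw [Finset.mem_singleton] at hjCm
        subst hjCm
        exact hne (by rw [hi])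
  have hcardiff : 2 ≤ B.card ↔ 2 ≤ Cm.card := by
    constructor
    · intro h2
      exact h2.trans (Finset.card_le_card hBCm)
    · intro h2
      by_contra hc
      have hB1 : B.card = 1 := by
        have := Finset.card_pos.2 hBne; omega
      obtain ⟨i, hi⟩ := Finset.card_eq_one.1 hB1
      have hiK : i ∈ K := by
        have : B ⊆ K := by rw [← hCmK]; exact Finset.inter_subset_right
        exact this (hi ▸ Finset.mem_singleton_self i)
      have hiD : ({i} : Finset ℕ) ∈ D := by
        refine Finset.mem_filter.2 ⟨h.2.1 i (hKA hiK), ?_⟩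
        rw [hi]
        apply subset_antisymm Finset.inter_subset_left
        intro x hx
        rw [Finset.mem_singleton] at hx
        exact Finset.mem_inter.2 ⟨hx ▸ Finset.mem_singleton_self x,
          hx ▸ hiK⟩
      have := hCmle _ hiD
      have : Cm.card ≤ 1 := by
        calc Cm.card ≤ ({i} : Finset ℕ).card := Finset.card_le_card this
        _ = 1 := by simp
      omega
  rw [hmass]
  by_cases hCm2 : 2 ≤ Cm.card
  · rw [if_pos hCm2, if_pos (hcardiff.2 hCm2)]
    have hford : fordWeight α Cm = α := by simp [fordWeight, hCm2]
    rw [hford, Finset.card_sdiff_of_subset hCmCM]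
    have h1 : Cm.card ≤ CM.card := Finset.card_le_card hCmCM
    push_cast [Nat.cast_sub h1]
    ring
  · rw [if_neg hCm2, if_neg (fun hc => hCm2 (hcardiff.1 hc))]
    have hCm1 : Cm.card = 1 := by
      have := Finset.card_pos.2 hCmne; omega
    have hford : fordWeight α Cm = 1 - α := by simp [fordWeight, hCm2]
    rw [hford, hCm1]
    push_cast
    ring


theorem per_tree (α : ℝ) {n k : ℕ} (hn : 2 ≤ n) (hk1 : 1 ≤ k) (hkn : k ≤ n - 1)
    (s : LTree (lbl (n - 1))) (d' : DecoT) :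
    (∑ t : LTree (lbl n), growStepF α (n - 1) s.1 t.1 *
      (if rhoDeco n k t.1 = d' then 1 else 0))
    = upProb α (n - 1) (rhoDeco (n - 1) k s.1) d' := by
  obtain ⟨m, rfl⟩ : ∃ m, n = m + 1 := ⟨n - 1, by omega⟩
  have hkn' : k ≤ m := by omega
  have hm : 1 ≤ m := by omega
  obtain ⟨s, hs0⟩ := s
  have hs : IsLTree (lbl m) s := hs0
  show (∑ t : LTree (lbl (m + 1)), growStepF α m s t.1 *
      (if rhoDeco (m + 1) k t.1 = d' then 1 else 0))
    = upProb α m (rhoDeco m k s) d'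
  have hK : (lbl k).Nonempty := ⟨1, by simp [lbl, Finset.mem_Icc]; omega⟩
  have hKA : lbl k ⊆ lbl m := fun x hx => by
    simp only [lbl, Finset.mem_Icc] at hx ⊢; omega
  have hnA : (m + 1) ∉ lbl m := by simp [lbl, Finset.mem_Icc]
  have hlbl : lbl (m + 1) = insert (m + 1) (lbl m) := by
    ext x; simp only [lbl, Finset.mem_Icc, Finset.mem_insert]; omega
  have hAne : (lbl m).Nonempty := ⟨1, by simp [lbl, Finset.mem_Icc]; omega⟩
  have hcardA : (lbl m).card = m := by simp [lbl]
  have hW : ∑ S' ∈ s, fordWeight α S' = (m : ℝ) - α := by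
    rw [sum_fordWeight hs hAne α, hcardA]
  set d := rhoDeco m k s with hd
  have hd1 : d.1 = restrictT s (lbl k) := rfl
  have hd2 : ∀ B, d.2 B = ((lbl m).filter (fun j => piProjA s (lbl k) j = B)).card :=
    fun B => rfl
  have step1 : ∀ S ∈ s, (∑ t : LTree (lbl (m + 1)),
      (if t.1 = insertLeaf s S (m + 1) then fordWeight α S / ((m : ℝ) - α) else 0) *
        (if rhoDeco (m + 1) k t.1 = d' then 1 else 0))
      = fordWeight α S / ((m : ℝ) - α) *
          (if bumpD d (pEdge s (lbl k) S) = d' then 1 else 0) := by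
    intro S hS
    have hu : IsLTree (lbl (m + 1)) (insertLeaf s S (m + 1)) := by
      rw [hlbl]; exact insertLeaf_isLTree hs hS hnA
    letI : Fintype { t // IsLTree (lbl (m + 1)) t } := fintypeLTree (lbl (m + 1))
    have hmem : (⟨insertLeaf s S (m + 1), hu⟩ : LTree (lbl (m + 1)))
        ∈ (Finset.univ : Finset (LTree (lbl (m + 1)))) := Finset.mem_univ _
    refine (Finset.sum_eq_single_of_mem (⟨insertLeaf s S (m + 1), hu⟩ : LTree (lbl (m + 1)))
      hmem ?_).trans ?_
    · intro t _ hne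
      rw [if_neg (fun hEq => hne (Subtype.ext hEq)), zero_mul]
    · rw [if_pos rfl, rhoDeco_insertLeaf hk1 hkn' hs hS]
  have lhs_eq : (∑ t : LTree (lbl (m + 1)), growStepF α m s t.1 *
      (if rhoDeco (m + 1) k t.1 = d' then 1 else 0))
      = ∑ S ∈ s, fordWeight α S / ((m : ℝ) - α) *
          (if bumpD d (pEdge s (lbl k) S) = d' then 1 else 0) := by
    simp only [growStepF, hW, Finset.sum_mul]
    rw [Finset.sum_comm]
    exact Finset.sum_congr rfl step1
  rw [lhs_eq]
  have hmaps : ∀ S ∈ s, pEdge s (lbl k) S ∈ d.1 := by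
    intro S hS
    obtain ⟨L, hLs, hSL, hLK, hmin⟩ := exists_least_anc hs hS hK hKA
    rw [pEdge_eq_of_least hLs hSL hLK hmin, hd1]
    simp only [restrictT, Finset.mem_erase, Finset.mem_image]
    exact ⟨Finset.nonempty_iff_ne_empty.1 hLK, L, hLs, rfl⟩
  rw [← Finset.sum_fiberwise_of_maps_to hmaps
    (fun S => fordWeight α S / ((m : ℝ) - α) *
      (if bumpD d (pEdge s (lbl k) S) = d' then 1 else 0))]
  unfold upProb
  refine Finset.sum_congr rfl (fun B hBd => ?_)
  have hBres : B ∈ restrictT s (lbl k) := hd1 ▸ hBd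
  have hin : ∀ S ∈ s.filter (fun S => pEdge s (lbl k) S = B),
      fordWeight α S / ((m : ℝ) - α) *
        (if bumpD d (pEdge s (lbl k) S) = d' then 1 else 0)
      = fordWeight α S * ((if bumpD d B = d' then 1 else 0) / ((m : ℝ) - α)) := by
    intro S hSf
    rw [(Finset.mem_filter.1 hSf).2]
    ring
  rw [Finset.sum_congr rfl hin, ← Finset.sum_mul, fiber_weight hk1 hkn' hs hBres α]
  rw [← hd2 B]
  have hcomm : (if d' = bumpD d B then (1 : ℝ) else 0)
      = (if bumpD d B = d' then 1 else 0) := by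
    simp only [eq_comm]
  rw [hcomm]
  split_ifs with h1 h2 h2 <;> ring

end Cor410
end AuxCor410

/-- **Corollary 4.10.** Under Ford's alpha growth, conditionally on
`ρ_k^{•(n-1)}(T_{n-1}) = 𝐭•`, the decorated tree `ρ_k^{•(n)}(T_n)` is obtained from
`𝐭•` by an up-move: an edge is chosen with probability `(x_i - α)/(n-1-α)` (external)
or `(y_B + α)/(n-1-α)` (internal) and its mass is increased by one. -/
theorem cor_insertion_unlabel (α : ℝ) (hα0 : 0 ≤ α) (hα1 : α ≤ 1) (n k : ℕ)
    (hn : 2 ≤ n) (hk1 : 1 ≤ k) (hkn : k ≤ n - 1)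
    (d : DecoT) (hd : IsDeco k (n - 1) d)
    (hpos : 0 < ∑ s : LTree (lbl (n - 1)),
      qF α (n - 1) s * (if rhoDeco (n - 1) k s.1 = d then 1 else 0)) :
    ∀ d' : DecoT,
      (∑ s : LTree (lbl (n - 1)), ∑ t : LTree (lbl n),
          (qF α (n - 1) s * growStepF α (n - 1) s.1 t.1) *
            (if rhoDeco (n - 1) k s.1 = d ∧ rhoDeco n k t.1 = d' then 1 else 0)) /
        (∑ s : LTree (lbl (n - 1)),
          qF α (n - 1) s * (if rhoDeco (n - 1) k s.1 = d then 1 else 0))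
      = upProb α (n - 1) d d' := by
  intro d'
  have hD : (∑ s : LTree (lbl (n - 1)),
      qF α (n - 1) s * (if rhoDeco (n - 1) k s.1 = d then 1 else 0)) ≠ 0 := ne_of_gt hpos
  have key : ∀ s : LTree (lbl (n - 1)),
      (∑ t : LTree (lbl n), (qF α (n - 1) s * growStepF α (n - 1) s.1 t.1) *
        (if rhoDeco (n - 1) k s.1 = d ∧ rhoDeco n k t.1 = d' then 1 else 0))
      = (qF α (n - 1) s * (if rhoDeco (n - 1) k s.1 = d then 1 else 0)) *
          upProb α (n - 1) d d' := by
    intro s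
    by_cases hsd : rhoDeco (n - 1) k s.1 = d
    · simp only [hsd, true_and, if_true]
      have hper := Cor410.per_tree α hn hk1 hkn s d'
      rw [hsd] at hper
      rw [← hper, Finset.mul_sum, mul_one]
      exact Finset.sum_congr rfl (fun t _ => by ring)
    · simp only [hsd, false_and, if_false, if_neg hsd]
      simp
  rw [Finset.sum_congr rfl (fun s _ => key s), ← Finset.sum_mul, mul_comm,
    mul_div_assoc, div_self hD, mul_one]
end

section
/- Let 𝕏 and 𝕐 be finite sets, P a stochastic matrix on 𝕏 with an invariant probability distribution q, and g : 𝕏 → 𝕐 a surjection with q(g^{−1}{y}) > 0 for all y ∈ 𝕐. Define the stochastic matrix Λ from 𝕐 to 𝕏 by Λ(y,x) := q(x)·1{g(x) = y}/q(g^{−1}{y}) and the stochastic matrix Q on 𝕐 by Q(y,y') := Σ_{x∈𝕏} Λ(y,x)·P(x, g^{−1}{y'}). Let (X_j)_{j≥0} be a Markov chain on 𝕏 with transition matrix P whose initial law ν satisfies: for every y ∈ 𝕐 with ν(g^{−1}{y}) > 0, the conditional law of X_0 given g(X_0) = y is Λ(y,·). Assume the intertwining relation ΛP = QΛ: Σ_{x}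 Λ(y,x)P(x,x') = Σ_{y'} Q(y,y')Λ(y',x') for all y ∈ 𝕐 and x' ∈ 𝕏. Then (g(X_j))_{j≥0} is a Markov chain with transition matrix Q (for every j ≥ 0 and all y₀,…,y_{j+1} ∈ 𝕐 with ℙ(g(X_0)=y₀,…,g(X_j)=y_j) > 0, ℙ(g(X_{j+1})=y_{j+1} ∣ g(X_0)=y₀,…,g(X_j)=y_j) = Q(y_j,y_{j+1})), and for every j ≥ 0 and all y₀,…,y_j with ℙ(g(X_0)=y₀,…,g(X_j)=y_j) > 0, the conditional law of X_j given g(X_0)=y₀,…,g(X_j)=y_j is Λ(y_j,·). -/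
open scoped Classical

set_option linter.unusedSectionVars false
set_option maxHeartbeats 1000000
noncomputable section RPaux
variable {X Y : Type*} [Fintype X] [Fintype Y]

def rpW (ν : X → ℝ) (P : X → X → ℝ) (j : ℕ) (x : Fin (j+1) → X) : ℝ :=
  ν (x ⟨0, Nat.succ_pos j⟩) * ∏ l : Fin j, P (x l.castSucc) (x l.succ)

def rpS (ν : X → ℝ) (P : X → X → ℝ) (g : X → Y) (ys : ℕ → Y) (j : ℕ) : ℝ :=
  ∑ x : Fin (j+1) → X, rpW ν P j x * (if ∀ l : Fin (j+1), g (x l) = ys l.1 then 1 else 0)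

def rpF (ν : X → ℝ) (P : X → X → ℝ) (g : X → Y) (ys : ℕ → Y) (j : ℕ) (x' : X) : ℝ :=
  ∑ x : Fin (j+1) → X, rpW ν P j x *
    (if (∀ l : Fin (j+1), g (x l) = ys l.1) ∧ x ⟨j, Nat.lt_succ_self j⟩ = x' then 1 else 0)

lemma rpW_snoc (ν : X → ℝ) (P : X → X → ℝ) (j : ℕ) (x : Fin (j+1) → X) (a : X) :
    rpW ν P (j+1) (Fin.snoc x a) = rpW ν P j x * P (x (Fin.last j)) a := by
  simp only [rpW, Fin.prod_univ_castSucc]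
  rw [show ((⟨0, Nat.succ_pos (j+1)⟩ : Fin (j+2))) = Fin.castSucc ⟨0, Nat.succ_pos j⟩ from rfl]
  simp only [Fin.snoc_castSucc, Fin.succ_castSucc, Fin.succ_last, Fin.snoc_last]
  ring

lemma rp_ind (g : X → Y) (ys : ℕ → Y) (j : ℕ) (x : Fin (j+1) → X) (a : X) :
    (∀ l : Fin (j+2), g ((Fin.snoc x a : Fin (j+2) → X) l) = ys l.1) ↔
      (∀ l : Fin (j+1), g (x l) = ys l.1) ∧ g a = ys (j+1) := by
  constructor
  · intro h
    refine ⟨fun l => ?_, ?_⟩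
    · simpa [Fin.snoc_castSucc] using h l.castSucc
    · simpa [Fin.snoc_last] using h (Fin.last (j+1))
  · rintro ⟨h1, h2⟩ l
    induction l using Fin.lastCases with
    | last => simpa [Fin.snoc_last] using h2
    | cast i => simpa [Fin.snoc_castSucc] using h1 i

lemma rp_esum (j : ℕ) (h : (Fin (j+2) → X) → ℝ) :
    (∑ x : Fin (j+2) → X, h x) = ∑ a : X, ∑ x : Fin (j+1) → X, h (Fin.snoc x a) := by
  rw [← Equiv.sum_comp (Fin.snocEquiv (fun _ => X)) h, Fintype.sum_prod_type]
  rfl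

lemma rp_last (j : ℕ) (x : Fin (j+1) → X) :
    x ⟨j, Nat.lt_succ_self j⟩ = x (Fin.last j) := rfl

end RPaux

/-- **Lemma 5.4 (Rogers–Pitman intertwining).** Let `P` be a stochastic matrix on a
finite set `𝕏` with invariant probability `q`, `g : 𝕏 → 𝕐` a surjection with
positive fiber masses, `Λ(y,·) = q(· | g = y)`, `Q = Λ P g`, and let `(X_j)` be a
`P`-chain whose initial law `ν` has conditional law `Λ(y,·)` given `g(X_0) = y`.
If `Λ P = Q Λ`, then `(g(X_j))_{j≥0}` is Markov with transition matrix `Q`, and the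
conditional law of `X_j` given `g(X_0) = y₀, …, g(X_j) = y_j` is `Λ(y_j, ·)`. -/
theorem rogers_pitman_intertwining {X Y : Type*} [Fintype X] [Fintype Y]
    (P : X → X → ℝ) (hP0 : ∀ x x', 0 ≤ P x x') (hP1 : ∀ x, ∑ x', P x x' = 1)
    (q : X → ℝ) (hq0 : ∀ x, 0 ≤ q x) (hq1 : ∑ x, q x = 1)
    (hqinv : ∀ x' : X, ∑ x, q x * P x x' = q x')
    (g : X → Y) (hg : Function.Surjective g)
    (hgq : ∀ y : Y, 0 < ∑ x, q x * (if g x = y then 1 else 0))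
    (Λ : Y → X → ℝ)
    (hΛ : ∀ y x, Λ y x =
      q x * (if g x = y then 1 else 0) / (∑ x', q x' * (if g x' = y then 1 else 0)))
    (Q : Y → Y → ℝ)
    (hQ : ∀ y y', Q y y' =
      ∑ x, Λ y x * (∑ x', P x x' * (if g x' = y' then 1 else 0)))
    (ν : X → ℝ) (hν0 : ∀ x, 0 ≤ ν x) (hν1 : ∑ x, ν x = 1)
    (hν : ∀ y : Y, 0 < (∑ x, ν x * (if g x = y then 1 else 0)) →
      ∀ x : X, ν x * (if g x = y then 1 else 0) /
          (∑ x', ν x' * (if g x' = y then 1 else 0)) = Λ y x)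
    (hint : ∀ (y : Y) (x' : X),
      (∑ x, Λ y x * P x x') = ∑ y' : Y, Q y y' * Λ y' x') :
    (∀ (j : ℕ) (ys : ℕ → Y),
      0 < (∑ x : Fin (j + 1) → X,
            (ν (x ⟨0, Nat.succ_pos j⟩) * ∏ l : Fin j, P (x l.castSucc) (x l.succ)) *
              (if ∀ l : Fin (j + 1), g (x l) = ys l.1 then 1 else 0)) →
      (∑ x : Fin (j + 2) → X,
            (ν (x ⟨0, Nat.succ_pos (j + 1)⟩) *
                ∏ l : Fin (j + 1), P (x l.castSucc) (x l.succ)) *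
              (if ∀ l : Fin (j + 2), g (x l) = ys l.1 then 1 else 0)) /
        (∑ x : Fin (j + 1) → X,
            (ν (x ⟨0, Nat.succ_pos j⟩) * ∏ l : Fin j, P (x l.castSucc) (x l.succ)) *
              (if ∀ l : Fin (j + 1), g (x l) = ys l.1 then 1 else 0))
      = Q (ys j) (ys (j + 1))) ∧
    (∀ (j : ℕ) (ys : ℕ → Y),
      0 < (∑ x : Fin (j + 1) → X,
            (ν (x ⟨0, Nat.succ_pos j⟩) * ∏ l : Fin j, P (x l.castSucc) (x l.succ)) *
              (if ∀ l : Fin (j + 1), g (x l) = ys l.1 then 1 else 0)) →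
      ∀ x' : X,
        (∑ x : Fin (j + 1) → X,
            (ν (x ⟨0, Nat.succ_pos j⟩) * ∏ l : Fin j, P (x l.castSucc) (x l.succ)) *
              (if (∀ l : Fin (j + 1), g (x l) = ys l.1) ∧ x ⟨j, Nat.lt_succ_self j⟩ = x'
                then 1 else 0)) /
          (∑ x : Fin (j + 1) → X,
            (ν (x ⟨0, Nat.succ_pos j⟩) * ∏ l : Fin j, P (x l.castSucc) (x l.succ)) *
              (if ∀ l : Fin (j + 1), g (x l) = ys l.1 then 1 else 0))
        = Λ (ys j) x') := by
  have indpos : ∀ (p : Prop) [Decidable p], (0:ℝ) ≤ if p then 1 else 0 := by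
    intro p _; split <;> norm_num
  have indmul : ∀ (p q : Prop) [Decidable p] [Decidable q],
      (if p ∧ q then (1:ℝ) else 0) = (if p then 1 else 0) * (if q then 1 else 0) := by
    intro p q _ _; by_cases hp : p <;> by_cases hq : q <;> simp [hp, hq]
  have hΛ1 : ∀ y, ∑ x, Λ y x = 1 := by
    intro y
    simp only [hΛ]
    rw [← Finset.sum_div, div_self (hgq y).ne']
  have hΛz : ∀ y x, g x ≠ y → Λ y x = 0 := by
    intro y x h; simp [hΛ, h]
  have hsumc : ∀ (x' : X) (c : Y → ℝ),
      (∑ y' : Y, c y' * Λ y' x') = c (g x') * Λ (g x') x' := by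
    intro x' c
    rw [Finset.sum_eq_single (g x')]
    · intro y' _ hy'; rw [hΛz y' x' (Ne.symm hy'), mul_zero]
    · simp
  have keyΛ : ∀ (c : Y → ℝ) (y : Y) (x' : X),
      (if g x' = y then (1:ℝ) else 0) * (∑ y' : Y, c y' * Λ y' x') = c y * Λ y x' := by
    intro c y x'
    by_cases h : g x' = y
    · rw [if_pos h, one_mul, hsumc, h]
    · rw [if_neg h, zero_mul, hΛz y x' h, mul_zero]
  have hSF : ∀ (j : ℕ) (ys : ℕ → Y), rpS ν P g ys j = ∑ x' : X, rpF ν P g ys j x' := by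
    intro j ys
    simp only [rpF, rpS]
    rw [Finset.sum_comm]
    refine Finset.sum_congr rfl fun x _ => ?_
    rw [← Finset.mul_sum]
    congr 1
    rw [Finset.sum_eq_single (x ⟨j, Nat.lt_succ_self j⟩)]
    · simp
    · intro b _ hb
      simp [show ¬ (x ⟨j, Nat.lt_succ_self j⟩ = b) from fun h => hb h.symm]
    · simp
  have part2 : ∀ (j : ℕ) (ys : ℕ → Y),
      (∀ x'', rpF ν P g ys j x'' = rpS ν P g ys j * Λ (ys j) x'') →
      ∀ x', rpF ν P g ys (j+1) x'
        = rpS ν P g ys j * Q (ys j) (ys (j+1)) * Λ (ys (j+1)) x' := by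
    intro j ys hFS x'
    have step1 : rpF ν P g ys (j+1) x' =
        ∑ x : Fin (j+1) → X, (rpW ν P j x * P (x (Fin.last j)) x') *
          (if (∀ l : Fin (j+1), g (x l) = ys l.1) ∧ g x' = ys (j+1) then 1 else 0) := by
      rw [show rpF ν P g ys (j+1) x' = ∑ x : Fin (j+2) → X, rpW ν P (j+1) x *
            (if (∀ l : Fin (j+2), g (x l) = ys l.1) ∧ x (Fin.last (j+1)) = x' then 1 else 0)
          from rfl, rp_esum]
      rw [Finset.sum_eq_single x']
      · refine Finset.sum_congr rfl fun x _ => ?_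
        rw [rpW_snoc]
        refine congrArg _ (if_congr ?_ rfl rfl)
        rw [rp_ind, Fin.snoc_last]
        constructor
        · rintro ⟨⟨h1, h2⟩, -⟩; exact ⟨h1, h2⟩
        · rintro ⟨h1, h2⟩; exact ⟨⟨h1, h2⟩, rfl⟩
      · intro a _ ha
        refine Finset.sum_eq_zero fun x _ => ?_
        rw [if_neg, mul_zero]
        rintro ⟨-, h2⟩
        exact ha (by simpa [Fin.snoc_last] using h2)
      · intro h; exact absurd (Finset.mem_univ x') h
    have step2 : (∑ x'' : X, rpF ν P g ys j x'' * P x'' x')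
        = ∑ x : Fin (j+1) → X, rpW ν P j x *
            (if ∀ l : Fin (j+1), g (x l) = ys l.1 then 1 else 0) * P (x (Fin.last j)) x' := by
      simp only [rpF, Finset.sum_mul]
      rw [Finset.sum_comm]
      refine Finset.sum_congr rfl fun x _ => ?_
      rw [Finset.sum_eq_single (x ⟨j, Nat.lt_succ_self j⟩)]
      · simp [rp_last]
      · intro b _ hb
        simp [show ¬ (x ⟨j, Nat.lt_succ_self j⟩ = b) from fun h => hb h.symm]
      · simp
    have step3 : (∑ x'' : X, rpF ν P g ys j x'' * P x'' x')
        = rpS ν P g ys j * ∑ y' : Y, Q (ys j) y' * Λ y' x' := by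
      rw [← hint, Finset.mul_sum]
      refine Finset.sum_congr rfl fun x'' _ => ?_
      rw [hFS x'']; ring
    have step4 : rpF ν P g ys (j+1) x' = (if g x' = ys (j+1) then (1:ℝ) else 0) *
        (∑ x'' : X, rpF ν P g ys j x'' * P x'' x') := by
      rw [step1, step2, Finset.mul_sum]
      refine Finset.sum_congr rfl fun x _ => ?_
      rw [indmul]; ring
    rw [step4, step3, show (if g x' = ys (j+1) then (1:ℝ) else 0) *
          (rpS ν P g ys j * ∑ y' : Y, Q (ys j) y' * Λ y' x')
        = rpS ν P g ys j * ((if g x' = ys (j+1) then (1:ℝ) else 0) *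
          ∑ y' : Y, Q (ys j) y' * Λ y' x') from by ring, keyΛ, mul_assoc]
  have part3 : ∀ (j : ℕ) (ys : ℕ → Y) (C : ℝ),
      (∀ x', rpF ν P g ys (j+1) x' = C * Λ (ys (j+1)) x') → rpS ν P g ys (j+1) = C := by
    intro j ys C h
    rw [hSF, Finset.sum_congr rfl (fun x' _ => h x'), ← Finset.mul_sum, hΛ1, mul_one]
  have key1 : ∀ (j : ℕ) (ys : ℕ → Y) (x' : X),
      rpF ν P g ys j x' = rpS ν P g ys j * Λ (ys j) x' := by
    intro j
    induction j with
    | zero =>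
      intro ys x'
      have e : ∀ h : (Fin 1 → X) → ℝ, (∑ x : Fin 1 → X, h x) = ∑ a : X, h (fun _ => a) := by
        intro h
        exact ((Equiv.funUnique (Fin 1) X).symm.sum_comp h).symm
      have hforall : ∀ x : X, (∀ l : Fin (0+1), g x = ys l.1) ↔ g x = ys 0 := by
        intro x
        constructor
        · intro h; exact h ⟨0, Nat.succ_pos 0⟩
        · intro h l
          have hl : (l.1 : ℕ) = 0 := Nat.lt_one_iff.1 l.2
          rw [hl]; exact h
      simp only [rpF, rpS, rpW, e]
      simp only [Fin.prod_univ_zero, mul_one]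
      simp only [hforall]
      have hL : (∑ a : X, ν a * if g a = ys 0 ∧ a = x' then 1 else 0)
          = ν x' * (if g x' = ys 0 then 1 else 0) := by
        rw [Finset.sum_eq_single x']
        · simp
        · intro b _ hb; simp [hb]
        · simp
      rw [hL]
      by_cases hpos : 0 < ∑ a : X, ν a * (if g a = ys 0 then (1:ℝ) else 0)
      · have h := hν (ys 0) hpos x'
        rw [div_eq_iff hpos.ne'] at h
        rw [h]; ring
      · have hnn : ∀ a ∈ Finset.univ, (0:ℝ) ≤ ν a * (if g a = ys 0 then (1:ℝ) else 0) :=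
          fun a _ => mul_nonneg (hν0 a) (indpos _)
        have hD0 : (∑ a : X, ν a * (if g a = ys 0 then (1:ℝ) else 0)) = 0 :=
          le_antisymm (not_lt.1 hpos) (Finset.sum_nonneg hnn)
        have hterm : ν x' * (if g x' = ys 0 then (1:ℝ) else 0) = 0 :=
          (Finset.sum_eq_zero_iff_of_nonneg hnn).1 hD0 x' (Finset.mem_univ x')
        rw [hterm, hD0, zero_mul]
    | succ j ih =>
      intro ys x'
      rw [part2 j ys (ih ys) x', part3 j ys _ (part2 j ys (ih ys))]
  have key2 : ∀ (j : ℕ) (ys : ℕ → Y),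
      rpS ν P g ys (j+1) = rpS ν P g ys j * Q (ys j) (ys (j+1)) :=
    fun j ys => part3 j ys _ (part2 j ys (fun x'' => key1 j ys x''))
  constructor
  · intro j ys hpos
    have hpos' : (0:ℝ) < rpS ν P g ys j := hpos
    show rpS ν P g ys (j+1) / rpS ν P g ys j = Q (ys j) (ys (j+1))
    rw [key2 j ys, mul_comm, mul_div_assoc, div_self hpos'.ne', mul_one]
  · intro j ys hpos x'
    have hpos' : (0:ℝ) < rpS ν P g ys j := hpos
    show rpF ν P g ys j x' / rpS ν P g ys j = Λ (ys j) x'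
    rw [key1 j ys x', mul_comm, mul_div_assoc, div_self hpos'.ne', mul_one]
end
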